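/- arXiv:1201.2267 — 4 statements merged into one kernel-verified Lean document; each statement's English description precedes it below -/
import Mathlib

section
/- Suppose A ∈ ℕ is such that every set of n points in ℝ² in general position admits a k-partition with crossing number at most A. Let v₁,…,v_m be points in ℝ² with strictly increasing x-coordinates forming a downward-convex chain (for all i < j < l, v_j lies strictly above the segment from v_i to v_l), and let L be a set of n non-vertical lines, none passing through any v_j, such that the points of ℝ² dual to the lines of L are in general position and such that for each vertex v_j the conflict set L_{v_j} (the set of lines of L lying strictly below v_j) has cardinality exactly k. Then there exists a coloring of the lines of L such that (i) each color class has size at most k, and (ii) each conflict set L_{v_j} contains at most A + 1 distinct colors. -/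
open scoped Classical

noncomputable section

/-- A planar point set is in general position if no three distinct points are collinear. -/
def GenPos2 (P : Finset (ℝ × ℝ)) : Prop :=
  ∀ p ∈ P, ∀ q ∈ P, ∀ r ∈ P, p ≠ q → q ≠ r → p ≠ r →
    ¬ Collinear ℝ ({p, q, r} : Set (ℝ × ℝ))

/-- The triangle (convex hull) spanned by three points. -/
def triangle (t : Fin 3 → ℝ × ℝ) : Set (ℝ × ℝ) :=
  convexHull ℝ {t 0, t 1, t 2}

/-- The non-vertical line `y = a*x + b`, as a set of points. -/
def lineSet (a b : ℝ) : Set (ℝ × ℝ) := {p | p.2 = a * p.1 + b}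

/-- The open halfplane strictly below the line `y = a*x + b`. -/
def belowSet (a b : ℝ) : Set (ℝ × ℝ) := {p | p.2 < a * p.1 + b}

/-- A `k`-partition of an `n`-point set `P` : pairwise disjoint parts
`P_1, …, P_⌈n/k⌉` covering `P`, where the first `⌊n/k⌋` parts have size
exactly `k`, together with triangles containing the parts.
(Here `⌈n/k⌉ = (n + k - 1) / k` in natural-number arithmetic, and the
parts are indexed by `i = 0, …, ⌈n/k⌉ - 1`, the first `⌊n/k⌋ = n / k`
of them having size `k`.) -/
structure IsKPartition (P : Finset (ℝ × ℝ)) (n k : ℕ)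
    (parts : Fin ((n + k - 1) / k) → Finset (ℝ × ℝ))
    (tri : Fin ((n + k - 1) / k) → Fin 3 → ℝ × ℝ) : Prop where
  disjoint : ∀ i j, i ≠ j → Disjoint (parts i) (parts j)
  cover : Finset.univ.biUnion parts = P
  size : ∀ i : Fin ((n + k - 1) / k), (i : ℕ) < n / k → (parts i).card = k
  inTriangle : ∀ i, ↑(parts i) ⊆ triangle (tri i)

/-- The line `y = a*x + b` is `k`-shallow for `P` : it contains no point of `P`
and at most `k` points of `P` lie strictly below it. -/
def IsShallow (P : Finset (ℝ × ℝ)) (k : ℕ) (a b : ℝ) : Prop :=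
  (∀ p ∈ P, p ∉ lineSet a b) ∧ (P.filter (fun p => p ∈ belowSet a b)).card ≤ k

/-- The number of triangles of the partition that the line `y = a*x + b` intersects. -/
def crossCount {N : ℕ} (tri : Fin N → Fin 3 → ℝ × ℝ) (a b : ℝ) : ℕ :=
  (Finset.univ.filter fun i => (lineSet a b ∩ triangle (tri i)).Nonempty).card

/-- The duality transform: the non-vertical line `y = a*x + b` maps to the
point `(a/2, -b)` (and the point `(p_x, p_y)` maps to the line
`y = 2*p_x*x - p_y`). -/
def dualPoint (l : ℝ × ℝ) : ℝ × ℝ := (l.1 / 2, -l.2)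

/-! ### Auxiliary material -/

/-- The reflected dual map: line `y = a x + b` goes to the point `(-a/2, b)`,
which is the reflection through the origin of `dualPoint`. -/
def st2f (l : ℝ × ℝ) : ℝ × ℝ := (-(l.1 / 2), l.2)

lemma st2f_inj : Function.Injective st2f := by
  intro x y h
  simp only [st2f, Prod.mk.injEq] at h
  exact Prod.ext (by linarith [h.1]) h.2

lemma st2f_neg (l : ℝ × ℝ) : -st2f l = dualPoint l := by
  simp [st2f, dualPoint, Prod.ext_iff]

lemma collinear_neg {s : Set (ℝ × ℝ)} (h : Collinear ℝ s) :
    Collinear ℝ ((fun x : ℝ × ℝ => -x) '' s) := by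
  obtain ⟨p₀, v, hv⟩ := (collinear_iff_exists_forall_eq_smul_vadd (k := ℝ) s).1 h
  refine (collinear_iff_exists_forall_eq_smul_vadd (k := ℝ)
    ((fun x : ℝ × ℝ => -x) '' s)).2 ⟨-p₀, v, ?_⟩
  rintro p ⟨q, hq, rfl⟩
  obtain ⟨r, hr⟩ := hv q hq
  exact ⟨-r, by rw [hr]; simp; module⟩

lemma st2N_le (n k : ℕ) (hk : k ≠ 0) : (n + k - 1) / k ≤ n / k + 1 := by
  rw [Nat.div_le_iff_le_mul_add_pred (Nat.pos_of_ne_zero hk)]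
  have h1 := Nat.div_add_mod n k
  have h2 := Nat.mod_lt n (Nat.pos_of_ne_zero hk)
  have : k * (n / k + 1) = k * (n / k) + k := by ring
  omega

/-- dual interpretation of shallow partitions.
Suppose `A` is such that every `n`-point set in general position admits a
`k`-partition with crossing number at most `A`.  Let `v 0, …, v (m-1)` be
points with strictly increasing `x`-coordinates forming a downward-convex
chain (each `v j` with `i < j < l` lies strictly above the segment from
`v i` to `v l`), and let `L` be a set of `n` non-vertical lines
(a line being encoded by its pair of coefficients `(a, b)` for `y = a*x+b`),
none passing through any `v j`, whose dual points are in general position,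
such that each conflict set (lines of `L` strictly below `v j`) has exactly
`k` elements.  Then `L` can be colored so that each color class has at most
`k` lines and each conflict set contains at most `A + 1` distinct colors. -/
theorem statement2 (n k A : ℕ)
    (hA : ∀ P : Finset (ℝ × ℝ), P.card = n → GenPos2 P →
      ∃ (parts : Fin ((n + k - 1) / k) → Finset (ℝ × ℝ))
        (tri : Fin ((n + k - 1) / k) → Fin 3 → ℝ × ℝ),
        IsKPartition P n k parts tri ∧
          ∀ a b : ℝ, IsShallow P k a b → crossCount tri a b ≤ A)
    (m : ℕ) (v : Fin m → ℝ × ℝ)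
    (hx : ∀ i j : Fin m, i < j → (v i).1 < (v j).1)
    (hconv : ∀ i j l : Fin m, i < j → j < l →
      ((v j).2 - (v i).2) * ((v l).1 - (v i).1) >
        ((v l).2 - (v i).2) * ((v j).1 - (v i).1))
    (L : Finset (ℝ × ℝ)) (hL : L.card = n)
    (hmiss : ∀ l ∈ L, ∀ j : Fin m, (v j).2 ≠ l.1 * (v j).1 + l.2)
    (hgp : GenPos2 (L.image dualPoint))
    (hconf : ∀ j : Fin m,
      (L.filter fun l => l.1 * (v j).1 + l.2 < (v j).2).card = k) :
    ∃ χ : ℝ × ℝ → ℕ,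
      (∀ c : ℕ, (L.filter fun l => χ l = c).card ≤ k) ∧
      (∀ j : Fin m,
        ((L.filter fun l => l.1 * (v j).1 + l.2 < (v j).2).image χ).card
          ≤ A + 1) := by
    classical
  set P : Finset (ℝ × ℝ) := L.image st2f with hPdef
  have hPcard : P.card = n := by
    rw [hPdef, Finset.card_image_of_injective _ st2f_inj, hL]
  have hPgp : GenPos2 P := by
    intro p hp q hq r hr hpq hqr hpr hcol
    have hneg : ∀ x ∈ P, -x ∈ L.image dualPoint := by
      intro x hx'
      obtain ⟨l, hl, rfl⟩ := Finset.mem_image.1 hx'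
      exact Finset.mem_image.2 ⟨l, hl, (st2f_neg l).symm⟩
    have hc2 : Collinear ℝ ({-p, -q, -r} : Set (ℝ × ℝ)) := by
      have := collinear_neg hcol
      simpa [Set.image_insert_eq, Set.image_singleton] using this
    exact hgp (-p) (hneg p hp) (-q) (hneg q hq) (-r) (hneg r hr)
      (fun h => hpq (neg_inj.1 h)) (fun h => hqr (neg_inj.1 h))
      (fun h => hpr (neg_inj.1 h)) hc2
  obtain ⟨parts, tri, hpart, hcross⟩ := hA P hPcard hPgp
  obtain ⟨hdisj, hcover, hsize, htri⟩ := hpart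
  have hsum : ∑ i : Fin ((n + k - 1) / k), (parts i).card = n := by
    rw [← Finset.card_biUnion (fun i _ j _ hij => hdisj i j hij), hcover, hPcard]
  have hexists : ∀ l ∈ L, ∃ i : Fin ((n + k - 1) / k), st2f l ∈ parts i := by
    intro l hl
    have hmem : st2f l ∈ P := Finset.mem_image_of_mem _ hl
    rw [← hcover] at hmem
    obtain ⟨i, _, hi⟩ := Finset.mem_biUnion.1 hmem
    exact ⟨i, hi⟩
  -- every part has at most `k` elements
  have hple : ∀ i : Fin ((n + k - 1) / k), (parts i).card ≤ k := by
    intro i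
    rcases Nat.eq_zero_or_pos k with hk | hk
    · exfalso
      have hlt := i.2
      have hz : (n + k - 1) / k = 0 := by rw [hk]; exact Nat.div_zero _
      omega
    by_cases hik : (i : ℕ) < n / k
    · exact le_of_eq (hsize i hik)
    · set T : Finset (Fin ((n + k - 1) / k)) := Finset.univ.filter (fun j => (j : ℕ) < n / k)
        with hTdef
      have hiT : i ∉ T := by simp [hTdef, hik]
      have hle : n / k ≤ (n + k - 1) / k := Nat.div_le_div_right (by omega)
      have hTcard : T.card = n / k := by
        rw [← Finset.card_range (n / k)]
        apply Finset.card_bij (fun (j : Fin ((n + k - 1) / k)) _ => (j : ℕ))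
        · intro a ha
          exact Finset.mem_range.2 ((Finset.mem_filter.1 ha).2)
        · intro a _ b _ hab; exact Fin.ext hab
        · intro c hc
          exact ⟨⟨c, lt_of_lt_of_le (Finset.mem_range.1 hc) hle⟩,
            Finset.mem_filter.2 ⟨Finset.mem_univ _, Finset.mem_range.1 hc⟩, rfl⟩
      have hTsum : ∑ j ∈ T, (parts j).card = k * (n / k) := by
        rw [Finset.sum_congr rfl
          (fun j hj => hsize j ((Finset.mem_filter.1 hj).2))]
        rw [Finset.sum_const, hTcard, smul_eq_mul, Nat.mul_comm]
      have hss : ∑ j ∈ insert i T, (parts j).card ≤ n :=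
        le_of_le_of_eq (Finset.sum_le_sum_of_subset (Finset.subset_univ _)) hsum
      rw [Finset.sum_insert hiT, hTsum] at hss
      have h1 := Nat.div_add_mod n k
      have h2 := Nat.mod_lt n hk
      omega
  choose idx hidx using hexists
  refine ⟨fun l => if h : l ∈ L then (idx l h : ℕ) else 0, ?_, ?_⟩
  · -- color classes are small
    intro c
    by_cases hc : ∃ l, ∃ hl : l ∈ L, (idx l hl : ℕ) = c
    · obtain ⟨l₀, hl₀, hcl₀⟩ := hc
      have hcN : c < (n + k - 1) / k := hcl₀ ▸ (idx l₀ hl₀).2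
      have hsubset : (L.filter fun l =>
          (if h : l ∈ L then (idx l h : ℕ) else 0) = c).card
          ≤ (parts ⟨c, hcN⟩).card := by
        apply Finset.card_le_card_of_injOn st2f
        · intro l hl
          simp only [Finset.mem_coe, Finset.mem_filter] at hl ⊢
          obtain ⟨hlL, hlc⟩ := hl
          rw [dif_pos hlL] at hlc
          have : idx l hlL = ⟨c, hcN⟩ := Fin.ext hlc
          have hm := hidx l hlL
          rwa [this] at hm
        · exact fun x _ y _ h => st2f_inj h
      exact le_trans hsubset (hple _)
    · have : (L.filter fun l =>
          (if h : l ∈ L then (idx l h : ℕ) else 0) = c) = ∅ := by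
        apply Finset.filter_eq_empty_iff.2
        intro l hl hlc
        rw [dif_pos hl] at hlc
        exact hc ⟨l, hl, hlc⟩
      rw [this]
      simp
  · -- few colors per conflict set
    intro j
    set a : ℝ := 2 * (v j).1 with ha
    set b : ℝ := (v j).2 with hb
    have hiff : ∀ l : ℝ × ℝ,
        (st2f l ∈ belowSet a b ↔ l.1 * (v j).1 + l.2 < (v j).2) := by
      intro l
      simp only [belowSet, st2f, Set.mem_setOf_eq, ha, hb]
      constructor <;> intro h <;> nlinarith [h]
    have hBcard : (P.filter (fun p => p ∈ belowSet a b)).card = k := by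
      have heq : P.filter (fun p => p ∈ belowSet a b)
          = (L.filter fun l => l.1 * (v j).1 + l.2 < (v j).2).image st2f := by
        rw [hPdef, Finset.filter_image]
        congr 1
        apply Finset.filter_congr
        intro l _
        exact hiff l
      rw [heq, Finset.card_image_of_injective _ st2f_inj, hconf j]
    have hshallow : IsShallow P k a b := by
      constructor
      · intro p hp hline
        obtain ⟨l, hl, rfl⟩ := Finset.mem_image.1 hp
        simp only [lineSet, st2f, Set.mem_setOf_eq, ha, hb] at hline
        exact hmiss l hl j (by nlinarith [hline])
      · exact le_of_eq hBcard
    have hcc : crossCount tri a b ≤ A := hcross a b hshallow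
    set C : Finset (Fin ((n + k - 1) / k)) :=
      Finset.univ.filter (fun i => (lineSet a b ∩ triangle (tri i)).Nonempty)
      with hCdef
    have hCcard : C.card ≤ A := hcc
    set D : Finset (Fin ((n + k - 1) / k)) :=
      Finset.univ.filter (fun i => ∃ p ∈ parts i, p ∈ belowSet a b) with hDdef
    have hsub : ((L.filter fun l => l.1 * (v j).1 + l.2 < (v j).2).image
          fun l => (if h : l ∈ L then (idx l h : ℕ) else 0))
        ⊆ D.image (fun i : Fin ((n + k - 1) / k) => (i : ℕ)) := by
      intro c hc
      obtain ⟨l, hl, rfl⟩ := Finset.mem_image.1 hc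
      rw [Finset.mem_filter] at hl
      refine Finset.mem_image.2 ⟨idx l hl.1, ?_, by rw [dif_pos hl.1]⟩
      exact Finset.mem_filter.2 ⟨Finset.mem_univ _,
        ⟨st2f l, hidx l hl.1, (hiff l).2 hl.2⟩⟩
    -- parts meeting the below-region but not the line are entirely below
    have hbelow : ∀ i ∈ D \ C, ∀ p ∈ parts i, p ∈ belowSet a b := by
      intro i hi p hp
      obtain ⟨hiD, hiC⟩ := Finset.mem_sdiff.1 hi
      obtain ⟨q, hq, hqb⟩ := (Finset.mem_filter.1 hiD).2
      by_contra hpb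
      have hpP : p ∈ P := by
        rw [← hcover]
        exact Finset.mem_biUnion.2 ⟨i, Finset.mem_univ _, hp⟩
      have hpline := hshallow.1 p hpP
      have hpabove : a * p.1 + b < p.2 := by
        rcases lt_trichotomy p.2 (a * p.1 + b) with h | h | h
        · exact absurd h hpb
        · exact absurd h hpline
        · exact h
      have hqb' : q.2 < a * q.1 + b := hqb
      set g : ℝ → ℝ := fun t =>
        ((1 - t) * q.2 + t * p.2) - (a * ((1 - t) * q.1 + t * p.1) + b)
        with hgdef
      have hgc : ContinuousOn g (Set.Icc (0:ℝ) 1) := by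
        apply Continuous.continuousOn
        rw [hgdef]
        fun_prop
      have h0 : g 0 ≤ 0 := by simp [hgdef]; linarith
      have h1 : (0:ℝ) ≤ g 1 := by simp [hgdef]; linarith
      obtain ⟨t₀, ht₀, hg0⟩ :=
        intermediate_value_Icc (by norm_num : (0:ℝ) ≤ 1) hgc ⟨h0, h1⟩
      have hq' : q ∈ triangle (tri i) := htri i hq
      have hp' : p ∈ triangle (tri i) := htri i hp
      have hxmem : ((1 - t₀) • q + t₀ • p) ∈ triangle (tri i) := by
        exact (convex_convexHull ℝ _) hq' hp'
          (by linarith [ht₀.2]) ht₀.1 (by ring)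
      apply hiC
      refine Finset.mem_filter.2 ⟨Finset.mem_univ _,
        ⟨(1 - t₀) • q + t₀ • p, ?_, hxmem⟩⟩
      simp only [lineSet, Set.mem_setOf_eq, Prod.fst_add, Prod.snd_add,
        Prod.smul_fst, Prod.smul_snd, smul_eq_mul]
      simp only [hgdef] at hg0
      linarith
    have hcard1 : (D \ C).card ≤ 1 := by
      rw [Finset.card_le_one]
      intro i hi i' hi'
      by_contra hne
      obtain ⟨hiD, _⟩ := Finset.mem_sdiff.1 hi
      obtain ⟨hiD', _⟩ := Finset.mem_sdiff.1 hi'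
      obtain ⟨q, hq, _⟩ := (Finset.mem_filter.1 hiD).2
      obtain ⟨q', hq', _⟩ := (Finset.mem_filter.1 hiD').2
      have hsubB : parts i ⊆ P.filter (fun p => p ∈ belowSet a b) := by
        intro p hp
        refine Finset.mem_filter.2 ⟨?_, hbelow i hi p hp⟩
        rw [← hcover]
        exact Finset.mem_biUnion.2 ⟨i, Finset.mem_univ _, hp⟩
      have hsubB' : parts i' ⊆ P.filter (fun p => p ∈ belowSet a b) := by
        intro p hp
        refine Finset.mem_filter.2 ⟨?_, hbelow i' hi' p hp⟩
        rw [← hcover]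
        exact Finset.mem_biUnion.2 ⟨i', Finset.mem_univ _, hp⟩
      have hdis := hdisj i i' hne
      have hcup : (parts i ∪ parts i').card
          = (parts i).card + (parts i').card :=
        Finset.card_union_of_disjoint hdis
      have hlek : (parts i ∪ parts i').card ≤ k := by
        calc (parts i ∪ parts i').card
            ≤ (P.filter (fun p => p ∈ belowSet a b)).card :=
              Finset.card_le_card (Finset.union_subset hsubB hsubB')
          _ = k := hBcard
      have h1 : 1 ≤ (parts i).card := Finset.card_pos.2 ⟨q, hq⟩
      have h1' : 1 ≤ (parts i').card := Finset.card_pos.2 ⟨q', hq'⟩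
      rcases Nat.lt_or_ge (i : ℕ) (n / k) with hik | hik
      · have := hsize i hik; omega
      rcases Nat.lt_or_ge (i' : ℕ) (n / k) with hik' | hik'
      · have := hsize i' hik'; omega
      rcases Nat.eq_zero_or_pos k with hk | hk
      · omega
      have hN := st2N_le n k (by omega)
      have e1 : (i : ℕ) = n / k :=
        le_antisymm (Nat.lt_succ_iff.1 (lt_of_lt_of_le i.2 hN)) hik
      have e1' : (i' : ℕ) = n / k :=
        le_antisymm (Nat.lt_succ_iff.1 (lt_of_lt_of_le i'.2 hN)) hik'
      exact hne (Fin.ext (e1.trans e1'.symm))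
    calc ((L.filter fun l => l.1 * (v j).1 + l.2 < (v j).2).image
          fun l => (if h : l ∈ L then (idx l h : ℕ) else 0)).card
        ≤ (D.image (fun i : Fin ((n + k - 1) / k) => (i : ℕ))).card := Finset.card_le_card hsub
      _ ≤ D.card := Finset.card_image_le
      _ ≤ (C ∪ (D \ C)).card := by
          apply Finset.card_le_card
          intro i hi
          by_cases h : i ∈ C
          · exact Finset.mem_union_left _ h
          · exact Finset.mem_union_right _ (Finset.mem_sdiff.2 ⟨hi, h⟩)
      _ ≤ C.card + (D \ C).card := Finset.card_union_le _ _
      _ ≤ A + 1 := Nat.add_le_add hCcard hcard1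

end
end

section
/- Let m = 2^β be a power of 2, let k be a multiple of β + 1, and set n = (2m − 1)·k/(β + 1). Suppose A ∈ ℕ is such that every set of n points in ℝ² in general position admits a k-partition with crossing number at most A. Then there exists a multi-coloring of the nodes of the complete binary tree T of height β with the following properties: (i) every node is assigned a multiset of exactly k/(β + 1) colors; (ii) each color class has size at most k; (iii) along each root-leaf path of T at most A + 1 distinct colors appear. -/
open scoped Classical

noncomputable section

/-- The nodes of the complete binary tree of height `β`, in heap indexing:
the `2^(β+1) - 1` numbers `1, …, 2^(β+1) - 1`.  The root is `1`, the children
of node `v` are `2*v` and `2*v + 1`, and the level of node `v` is `log₂ v`. -/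
def treeNodes (β : ℕ) : Finset ℕ := Finset.Ico 1 (2 ^ (β + 1))

/-- The leaves of the complete binary tree of height `β`: the `2^β` nodes on
level `β`. -/
def treeLeaves (β : ℕ) : Finset ℕ := Finset.Ico (2 ^ β) (2 ^ (β + 1))

/-- Given a multi-coloring `c` of the nodes (each node gets a multiset of
colors) and a leaf `l`, the set of distinct colors appearing along the
root-leaf path to `l`; the path consists of the ancestors `l / 2^t` of `l`. -/
def pathColors (β : ℕ) (c : ℕ → Multiset ℕ) (l : ℕ) : Finset ℕ :=
  (Finset.range (β + 1)).biUnion fun t => (c (l / 2 ^ t)).toFinset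



def lvl (v : ℕ) : ℕ := Nat.log 2 v
def sd (v : ℕ) : ℕ := v / 2 ^ (lvl v - 1) - 2
def prj (v : ℕ) : ℕ := 2 ^ (lvl v - 1) + v % 2 ^ (lvl v - 1)
def onPath (β l v : ℕ) : Prop := ∃ t, t ≤ β ∧ l / 2 ^ t = v

lemma lvl_eq {s v : ℕ} (h1 : 2 ^ s ≤ v) (h2 : v < 2 ^ (s + 1)) : lvl v = s :=
  Nat.log_eq_of_pow_le_of_lt_pow h1 h2

lemma sd_facts {s v : ℕ} (hs : 1 ≤ s) (h1 : 2 ^ s ≤ v) (h2 : v < 2 ^ (s + 1)) :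
    v / 2 ^ (s - 1) = 2 + sd v ∧ sd v ≤ 1 := by
  have hl : lvl v = s := lvl_eq h1 h2
  have hpos : 0 < (2:ℕ) ^ (s - 1) := Nat.pow_pos (by norm_num)
  have e1 : 2 ^ s = 2 * 2 ^ (s - 1) := by
    rw [← pow_succ']
    congr 1
    omega
  have e2 : 2 ^ (s + 1) = 4 * 2 ^ (s - 1) := by
    have : s + 1 = (s - 1) + 2 := by omega
    rw [this, pow_add]
    ring
  have hlo : 2 ≤ v / 2 ^ (s - 1) := by
    rw [Nat.le_div_iff_mul_le hpos]
    omega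
  have hhi : v / 2 ^ (s - 1) < 4 := by
    rw [Nat.div_lt_iff_lt_mul hpos]
    omega
  unfold sd
  rw [hl]
  omega

lemma recon {s v : ℕ} (hs : 1 ≤ s) (h1 : 2 ^ s ≤ v) (h2 : v < 2 ^ (s + 1)) :
    v = 2 ^ (s - 1) * (1 + sd v) + prj v ∧ 2 ^ (s - 1) ≤ prj v ∧ prj v < 2 ^ s := by
  have hl : lvl v = s := lvl_eq h1 h2
  have hpos : 0 < (2:ℕ) ^ (s - 1) := Nat.pow_pos (by norm_num)
  obtain ⟨hdiv, hsd⟩ := sd_facts hs h1 h2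
  have hmod : v % 2 ^ (s - 1) < 2 ^ (s - 1) := Nat.mod_lt _ hpos
  have hdm := Nat.div_add_mod v (2 ^ (s - 1))
  have hprj : prj v = 2 ^ (s - 1) + v % 2 ^ (s - 1) := by unfold prj; rw [hl]
  have e1 : 2 ^ s = 2 * 2 ^ (s - 1) := by
    rw [← pow_succ']; congr 1; omega
  rw [hdiv] at hdm
  constructor
  · have : 2 ^ (s - 1) * (1 + sd v) + prj v = 2 ^ (s - 1) * (2 + sd v) + v % 2 ^ (s - 1) := by
      rw [hprj]; ring
    omega
  · omega

lemma div_range {m l t : ℕ} (h1 : 2 ^ m ≤ l) (h2 : l < 2 ^ (m + 1)) (ht : t ≤ m) :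
    2 ^ (m - t) ≤ l / 2 ^ t ∧ l / 2 ^ t < 2 ^ (m - t + 1) := by
  have hpos : 0 < (2:ℕ) ^ t := Nat.pow_pos (by norm_num)
  have e1 : 2 ^ m = 2 ^ (m - t) * 2 ^ t := by rw [← pow_add]; congr 1; omega
  have e2 : 2 ^ (m + 1) = 2 ^ (m - t + 1) * 2 ^ t := by rw [← pow_add]; congr 1; omega
  constructor
  · rw [Nat.le_div_iff_mul_le hpos]; omega
  · rw [Nat.div_lt_iff_lt_mul hpos]; omega

lemma sd_prj_div {m l t : ℕ} (h1 : 2 ^ m ≤ l) (h2 : l < 2 ^ (m + 1)) (ht : t + 1 ≤ m) :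
    sd (l / 2 ^ t) = sd l ∧ prj (l / 2 ^ t) = prj l / 2 ^ t := by
  obtain ⟨u, hu⟩ : ∃ u, m = t + 1 + u := ⟨m - 1 - t, by omega⟩
  subst hu
  have hdr := div_range h1 h2 (by omega : t ≤ t + 1 + u)
  have he : t + 1 + u - t = u + 1 := by omega
  rw [he] at hdr
  have hm1 : t + 1 + u - 1 = t + u := by omega
  have hlvl_l : lvl l = t + 1 + u := lvl_eq h1 h2
  have hlvl_w : lvl (l / 2 ^ t) = u + 1 := lvl_eq hdr.1 hdr.2
  have hdd : l / 2 ^ t / 2 ^ u = l / 2 ^ (t + u) := by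
    rw [Nat.div_div_eq_div_mul, ← pow_add]
  have hmd : l % 2 ^ (t + u) / 2 ^ t = l / 2 ^ t % 2 ^ u := by
    have := Nat.mod_mul_right_div_self l (2 ^ t) (2 ^ u)
    rwa [← pow_add] at this
  constructor
  · unfold sd
    rw [hlvl_l, hlvl_w, hm1]
    simp only [Nat.add_sub_cancel]
    rw [hdd]
  · unfold prj
    rw [hlvl_l, hlvl_w, hm1]
    simp only [Nat.add_sub_cancel]
    have e1 : (2:ℕ) ^ (t + u) = 2 ^ t * 2 ^ u := by rw [← pow_add]
    rw [e1, Nat.mul_add_div (Nat.pow_pos (by norm_num)), ← e1, hmd]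

lemma root_onPath {β l : ℕ} (h1 : 2 ^ (β + 1) ≤ l) (h2 : l < 2 ^ (β + 2)) :
    onPath (β + 1) l 1 := by
  refine ⟨β + 1, le_refl _, ?_⟩
  have := div_range h1 (by rwa [show β + 1 + 1 = β + 2 from rfl]) (le_refl (β + 1))
  simp only [Nat.sub_self, pow_zero] at this
  omega

lemma onPath_step {β l v : ℕ} (hl1 : 2 ^ (β + 1) ≤ l) (hl2 : l < 2 ^ (β + 2))
    (hv1 : 2 ≤ v) (hv2 : v < 2 ^ (β + 2)) :
    onPath (β + 1) l v ↔ (sd v = sd l ∧ onPath β (prj l) (prj v)) := by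
  have hl2' : l < 2 ^ (β + 1 + 1) := hl2
  constructor
  · rintro ⟨t, ht, rfl⟩
    have htβ : t + 1 ≤ β + 1 := by
      by_contra h
      have : t = β + 1 := by omega
      subst this
      have := div_range hl1 hl2' (le_refl (β + 1))
      simp only [Nat.sub_self, pow_zero] at this
      omega
    obtain ⟨hsd, hprj⟩ := sd_prj_div hl1 hl2' htβ
    exact ⟨hsd, ⟨t, by omega, hprj.symm⟩⟩
  · rintro ⟨hsd, t, ht, hdiv⟩
    -- level of v
    set s := lvl v with hs
    have hv0 : v ≠ 0 := by omega
    have hls : 2 ^ s ≤ v := Nat.pow_log_le_self 2 hv0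
    have hus : v < 2 ^ (s + 1) := Nat.lt_pow_succ_log_self (by norm_num) v
    have hs1 : 1 ≤ s := by
      rw [hs]
      have : 2 ^ 1 ≤ v := hv1
      exact (Nat.le_log_iff_pow_le (by norm_num) hv0).mpr this
    obtain ⟨hvrec, hvlo, hvhi⟩ := recon hs1 hls hus
    -- leaf data
    obtain ⟨hlrec, hllo, hlhi⟩ := recon (by omega : 1 ≤ β + 1) hl1 hl2'
    have hplo : 2 ^ β ≤ prj l := by
      have : β + 1 - 1 = β := by omega
      rwa [this] at hllo
    have hphi : prj l < 2 ^ (β + 1) := hlhi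
    have hdr := div_range hplo hphi ht
    rw [hdiv] at hdr
    -- powers force s - 1 = β - t
    have hse : s - 1 = β - t := by
      have h1' : 2 ^ (β - t) < 2 ^ s := lt_of_le_of_lt hdr.1 hvhi
      have h2' : 2 ^ (s - 1) < 2 ^ (β - t + 1) := lt_of_le_of_lt hvlo hdr.2
      have b1 : β - t < s := (Nat.pow_lt_pow_iff_right (by norm_num)).mp h1'
      have b2 : s - 1 < β - t + 1 := (Nat.pow_lt_pow_iff_right (by norm_num)).mp h2'
      omega
    have hts : t + s = β + 1 := by omega
    refine ⟨β + 1 - s, by omega, ?_⟩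
    -- w := l / 2^t' where t' = β + 1 - s = t
    have htt : β + 1 - s = t := by omega
    rw [htt]
    have hwdr := div_range hl1 hl2' (by omega : t ≤ β + 1)
    have hwe : β + 1 - t = s := by omega
    rw [hwe] at hwdr
    have hw1 : 2 ≤ l / 2 ^ t := by
      have : (2:ℕ) ^ 1 ≤ 2 ^ s := Nat.pow_le_pow_right (by norm_num) hs1
      omega
    obtain ⟨hsdw, hprjw⟩ := sd_prj_div hl1 hl2' (by omega : t + 1 ≤ β + 1)
    obtain ⟨hwrec, _, _⟩ := recon hs1 hwdr.1 hwdr.2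
    have hlw : lvl (l / 2 ^ t) = s := lvl_eq hwdr.1 hwdr.2
    rw [hwrec, hvrec, hsdw, hsd, hprjw, hdiv]
lemma sd_le_one {s v : ℕ} (hs : 1 ≤ s) (h1 : 2 ^ s ≤ v) (h2 : v < 2 ^ (s + 1)) : sd v ≤ 1 :=
  (sd_facts hs h1 h2).2


lemma collinear_coords {p q r : ℝ × ℝ} (h : Collinear ℝ ({p, q, r} : Set (ℝ × ℝ))) :
    (q.1 - p.1) * (r.2 - p.2) = (r.1 - p.1) * (q.2 - p.2) := by
  rw [collinear_iff_of_mem (Set.mem_insert p {q, r})] at h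
  obtain ⟨v, hv⟩ := h
  obtain ⟨cq, hq⟩ := hv q (by simp)
  obtain ⟨cr, hr⟩ := hv r (by simp)
  have hq1 : q.1 = cq * v.1 + p.1 := by rw [hq]; rfl
  have hq2 : q.2 = cq * v.2 + p.2 := by rw [hq]; rfl
  have hr1 : r.1 = cr * v.1 + p.1 := by rw [hr]; rfl
  have hr2 : r.2 = cr * v.2 + p.2 := by rw [hr]; rfl
  rw [hq1, hq2, hr1, hr2]; ring

lemma exists_real_in_Ioo_notin (c w : ℝ) (hw : 0 < w) (bad : Finset ℝ) :
    ∃ x, x ∈ Set.Ioo (c - w) (c + w) ∧ x ∉ bad := by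
  have : (Set.Ioo (c - w) (c + w)).Infinite := Set.Ioo_infinite (by linarith)
  obtain ⟨x, hx, hxn⟩ := this.exists_notMem_finset bad
  exact ⟨x, hx, hxn⟩

lemma placement {ι : Type} [DecidableEq ι] (s : Finset ι) (center : ι → ℝ × ℝ)
    (w : ℝ) (hw : 0 < w) :
    ∃ f : ι → ℝ × ℝ,
      (∀ i ∈ s, |(f i).1 - (center i).1| < w ∧ |(f i).2 - (center i).2| < w) ∧
      (∀ i ∈ s, ∀ j ∈ s, i ≠ j → (f i).1 ≠ (f j).1) ∧
      (∀ i ∈ s, ∀ j ∈ s, ∀ m ∈ s, i ≠ j → j ≠ m → i ≠ m →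
        ¬ Collinear ℝ ({f i, f j, f m} : Set (ℝ × ℝ))) := by
  classical
  induction s using Finset.induction_on with
  | empty => exact ⟨fun _ => (0, 0), by simp, by simp, by simp⟩
  | @insert a s ha ih =>
    obtain ⟨f, hbox, hinj, hcol⟩ := ih
    obtain ⟨x, hx, hxbad⟩ := exists_real_in_Ioo_notin (center a).1 w hw
      (s.image fun i => (f i).1)
    obtain ⟨y, hy, hybad⟩ := exists_real_in_Ioo_notin (center a).2 w hw
      ((s ×ˢ s).image fun ij =>
        (f ij.1).2 + (x - (f ij.1).1) * ((f ij.2).2 - (f ij.1).2) / ((f ij.2).1 - (f ij.1).1))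
    set g := Function.update f a (x, y) with hg
    have gkey : ∀ i ∈ s, g i = f i := by
      intro i hi
      exact Function.update_of_ne (show i ≠ a from fun h => ha (h ▸ hi)) _ _
    have gax : g a = (x, y) := Function.update_self _ _ _
    have hxnot : ∀ i ∈ s, (f i).1 ≠ x := by
      intro i hi h
      exact hxbad (Finset.mem_image.mpr ⟨i, hi, h⟩)
    have main : ∀ i ∈ s, ∀ j ∈ s, i ≠ j →
        ¬ Collinear ℝ ({f i, f j, (x, y)} : Set (ℝ × ℝ)) := by
      intro i hi j hj hij hc
      have hne := hinj i hi j hj hij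
      have hdet := collinear_coords hc
      apply hybad
      refine Finset.mem_image.mpr ⟨(i, j), Finset.mem_product.mpr ⟨hi, hj⟩, ?_⟩
      have hsub : (f j).1 - (f i).1 ≠ 0 := sub_ne_zero.mpr hne.symm
      field_simp
      nlinarith [hdet]
    refine ⟨g, ?_, ?_, ?_⟩
    · intro i hi
      rcases Finset.mem_insert.mp hi with h | h
      · rw [h, gax]
        constructor <;>
          · rw [abs_lt]; constructor <;> [skip; skip] <;>
              simp only [] <;> [linarith [hx.1, hy.1]; linarith [hx.2, hy.2]]
      · rw [gkey i h]; exact hbox i h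
    · intro i hi j hj hij
      rcases Finset.mem_insert.mp hi with h | h
      · rcases Finset.mem_insert.mp hj with h' | h'
        · exact absurd (h.trans h'.symm) hij
        · rw [h, gax, gkey j h']
          exact fun e => hxnot j h' (e.symm)
      · rcases Finset.mem_insert.mp hj with h' | h'
        · rw [h', gax, gkey i h]
          exact hxnot i h
        · rw [gkey i h, gkey j h']; exact hinj i h j h' hij
    · intro i hi j hj m hm hij hjm him hc
      rcases Finset.mem_insert.mp hi with h1 | h1
      · rcases Finset.mem_insert.mp hj with h2 | h2
        · exact hij (h1.trans h2.symm)
        rcases Finset.mem_insert.mp hm with h3 | h3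
        · exact him (h1.trans h3.symm)
        rw [h1, gax, gkey j h2, gkey m h3] at hc
        have hset : ({((x:ℝ), (y:ℝ)), f j, f m} : Set (ℝ × ℝ)) = {f j, f m, (x, y)} := by
          ext z; simp only [Set.mem_insert_iff, Set.mem_singleton_iff]; tauto
        rw [hset] at hc
        exact main j h2 m h3 hjm hc
      · rcases Finset.mem_insert.mp hj with h2 | h2
        · rcases Finset.mem_insert.mp hm with h3 | h3
          · exact hjm (h2.trans h3.symm)
          rw [h2, gax, gkey i h1, gkey m h3] at hc
          have hset : ({f i, ((x:ℝ), (y:ℝ)), f m} : Set (ℝ × ℝ)) = {f i, f m, (x, y)} := by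
            ext z; simp only [Set.mem_insert_iff, Set.mem_singleton_iff]; tauto
          rw [hset] at hc
          exact main i h1 m h3 him hc
        · rcases Finset.mem_insert.mp hm with h3 | h3
          · rw [h3, gax, gkey i h1, gkey j h2] at hc
            exact main i h1 j h2 hij hc
          · rw [gkey i h1, gkey j h2, gkey m h3] at hc
            exact hcol i h1 j h2 m h3 hij hjm him hc
lemma scaled_abs_le {e u U : ℝ} (he : 0 < e) (he1 : e ≤ 1) (h : |u| ≤ U) :
    |e * u| ≤ U := by
  rw [abs_mul, abs_of_pos he]
  calc e * |u| ≤ 1 * |u| := mul_le_mul_of_nonneg_right he1 (abs_nonneg _)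
    _ = |u| := one_mul _
    _ ≤ U := h

lemma mul_abs_le {s u U : ℝ} (hs : 0 ≤ s) (h : |u| ≤ U) : |s * u| ≤ s * U := by
  rw [abs_mul, abs_of_nonneg hs]
  exact mul_le_mul_of_nonneg_left h hs

lemma construction (β : ℕ) :
    ∃ (p ab : ℕ → ℝ × ℝ) (δ M R C : ℝ), 0 < δ ∧ 0 ≤ M ∧ 0 ≤ R ∧ 0 ≤ C ∧
      (∀ v ∈ treeNodes β, |(p v).1| ≤ R ∧ |(p v).2| ≤ R) ∧
      (∀ l ∈ treeLeaves β, |(ab l).1| ≤ M ∧ |(ab l).2| ≤ C) ∧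
      (∀ l ∈ treeLeaves β, ∀ v ∈ treeNodes β,
        (onPath β l v → (p v).2 + δ < (ab l).1 * (p v).1 + (ab l).2) ∧
        (¬ onPath β l v → (ab l).1 * (p v).1 + (ab l).2 + δ < (p v).2)) := by
  induction β with
  | zero =>
    refine ⟨fun _ => (0, 0), fun _ => (0, 1), 1/2, 0, 0, 1, by norm_num, le_refl _,
      le_refl _, by norm_num, ?_, ?_, ?_⟩
    · intro v hv; simp
    · intro l hl; simp
    · intro l hl v hv
      simp only [treeLeaves, treeNodes, Finset.mem_Ico] at hl hv
      have hv1 : v = 1 := by omega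
      have hl1 : l = 1 := by norm_num at hl; omega
      subst hv1; subst hl1
      have hp : onPath 0 1 1 := ⟨0, le_refl _, by norm_num⟩
      constructor
      · intro _; norm_num
      · intro h; exact absurd hp h
  | succ β ih =>
    obtain ⟨p, ab, δ, M, R, C, hδ, hM, hR, hC, hpb, habb, hmain⟩ := ih
    obtain ⟨S, hS⟩ : ∃ S : ℝ, S = M + 1 := ⟨_, rfl⟩
    have hS0 : 0 < S := by rw [hS]; linarith
    have hMR : 0 ≤ M*R := mul_nonneg hM hR
    have hSR : 0 ≤ S*R := mul_nonneg hS0.le hR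
    obtain ⟨ε, hεpos, hεhalf, habs⟩ :
        ∃ ε : ℝ, 0 < ε ∧ ε ≤ 1/2 ∧
          ∀ z : ℝ, |z| ≤ R + 2*S*R + M*R + C → |ε*z| ≤ 1/2 - ε := by
      set E : ℝ := R + 2*S*R + M*R + C + 1 with hE
      have hE1 : 1 ≤ E := by rw [hE]; linarith
      refine ⟨1/(2*E), by positivity, ?_, ?_⟩
      · rw [div_le_div_iff₀ (by linarith) (by norm_num)]; linarith
      · intro z hz
        have hEpos : (0:ℝ) < 2*E := by linarith
        rw [abs_mul, abs_of_pos (by positivity : (0:ℝ) < 1/(2*E))]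
        rw [div_mul_eq_mul_div, div_le_iff₀ hEpos]
        have hz' : |z| ≤ E - 1 := by rw [hE]; linarith
        have habsz : 0 ≤ |z| := abs_nonneg _
        have hcancel : (1/(2*E)) * (2*E) = 1 := by field_simp
        nlinarith [hz', habsz, hE1, hcancel]
    have hε1 : ε ≤ 1 := by linarith
    obtain ⟨B, hB⟩ : ∃ B : ℝ, B = M + S + 3 := ⟨_, rfl⟩
    have hB3 : M + S + 3 ≤ B := le_of_eq hB.symm
    have hB0 : 3 ≤ B := by rw [hB]; linarith
    obtain ⟨δ', hδ'pos, hδ'εδ, hδ'4⟩ :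
        ∃ d : ℝ, 0 < d ∧ d ≤ ε*δ ∧ d ≤ 1/4 :=
      ⟨min (ε*δ) (1/4), lt_min (by positivity) (by norm_num), min_le_left _ _,
        min_le_right _ _⟩
    set p' : ℕ → ℝ × ℝ := fun v =>
      if v = 1 then ((0:ℝ), -B) else
      if sd v = 0 then (ε * (p (prj v)).1, ε * (p (prj v)).2 - S * (ε * (p (prj v)).1))
      else (1 + ε * (p (prj v)).1, ε * (p (prj v)).2 + S * (ε * (p (prj v)).1)) with hp'
    set ab' : ℕ → ℝ × ℝ := fun l =>
      if sd l = 0 then ((ab (prj l)).1 - S, ε * (ab (prj l)).2)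
      else ((ab (prj l)).1 + S, ε * (ab (prj l)).2 - (ab (prj l)).1 - S) with hab'
    have ep_root : p' 1 = ((0:ℝ), -B) := by rw [hp']; norm_num
    have ep0 : ∀ v, v ≠ 1 → sd v = 0 →
        p' v = (ε * (p (prj v)).1, ε * (p (prj v)).2 - S * (ε * (p (prj v)).1)) := by
      intro v h1 h2; rw [hp']; simp only [if_neg h1, if_pos h2]
    have ep1 : ∀ v, v ≠ 1 → sd v ≠ 0 →
        p' v = (1 + ε * (p (prj v)).1, ε * (p (prj v)).2 + S * (ε * (p (prj v)).1)) := by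
      intro v h1 h2; rw [hp']; simp only [if_neg h1, if_neg h2]
    have ea0 : ∀ l, sd l = 0 → ab' l = ((ab (prj l)).1 - S, ε * (ab (prj l)).2) := by
      intro l h2; rw [hab']; simp only [if_pos h2]
    have ea1 : ∀ l, sd l ≠ 0 →
        ab' l = ((ab (prj l)).1 + S, ε * (ab (prj l)).2 - (ab (prj l)).1 - S) := by
      intro l h2; rw [hab']; simp only [if_neg h2]
    have nodefacts : ∀ v, 2 ≤ v → v < 2 ^ (β + 2) →
        (1 ≤ lvl v ∧ lvl v ≤ β + 1 ∧ 2 ^ lvl v ≤ v ∧ v < 2 ^ (lvl v + 1) ∧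
          sd v ≤ 1 ∧ prj v ∈ treeNodes β) := by
      intro v hv2 hvlt
      have hv0 : v ≠ 0 := by omega
      have hls : 2 ^ lvl v ≤ v := Nat.pow_log_le_self 2 hv0
      have hus : v < 2 ^ (lvl v + 1) := Nat.lt_pow_succ_log_self (by norm_num) v
      have hs1 : 1 ≤ lvl v := (Nat.le_log_iff_pow_le (by norm_num) hv0).mpr hv2
      have hsle : lvl v ≤ β + 1 := by
        by_contra h
        have : 2 ^ (β + 2) ≤ 2 ^ lvl v := Nat.pow_le_pow_right (by norm_num) (by omega)
        omega
      obtain ⟨_, hplo, hphi⟩ := recon hs1 hls hus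
      refine ⟨hs1, hsle, hls, hus, (sd_facts hs1 hls hus).2, ?_⟩
      simp only [treeNodes, Finset.mem_Ico]
      constructor
      · have : (1:ℕ) ≤ 2 ^ (lvl v - 1) := Nat.one_le_two_pow
        omega
      · have : (2:ℕ) ^ lvl v ≤ 2 ^ (β + 1) := Nat.pow_le_pow_right (by norm_num) hsle
        omega
    have leaffacts : ∀ l, 2 ^ (β + 1) ≤ l → l < 2 ^ (β + 2) →
        (sd l ≤ 1 ∧ prj l ∈ treeLeaves β) := by
      intro l hl1 hl2
      have hl2' : l < 2 ^ (β + 1 + 1) := hl2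
      obtain ⟨_, hllo, hlhi⟩ := recon (by omega : 1 ≤ β + 1) hl1 hl2'
      refine ⟨(sd_facts (by omega) hl1 hl2').2, ?_⟩
      simp only [treeLeaves, Finset.mem_Ico]
      have e : β + 1 - 1 = β := by omega
      rw [e] at hllo
      exact ⟨hllo, hlhi⟩
    refine ⟨p', ab', δ', M + S, B + S*R + 2*R + 3, ε*C + M + S + 1,
      hδ'pos, by linarith, by linarith, ?_, ?_, ?_, ?_⟩
    · have : 0 ≤ ε*C := by positivity
      linarith
    · -- point bounds
      intro v hv
      simp only [treeNodes, Finset.mem_Ico] at hv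
      by_cases h1 : v = 1
      · subst h1
        rw [ep_root]
        constructor
        · show |(0:ℝ)| ≤ B + S*R + 2*R + 3
          rw [abs_zero]; linarith
        · show |-B| ≤ B + S*R + 2*R + 3
          rw [abs_neg, abs_of_nonneg (by linarith : (0:ℝ) ≤ B)]; linarith
      · have hv2 : 2 ≤ v := by omega
        obtain ⟨_, _, _, _, _, hprjmem⟩ := nodefacts v hv2 hv.2
        obtain ⟨xx, yy, hpv⟩ : ∃ x y, p (prj v) = (x, y) := ⟨_, _, rfl⟩
        have hx : |xx| ≤ R := by
          have h := (hpb _ hprjmem).1; rw [hpv] at h; exact h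
        have hy : |yy| ≤ R := by
          have h := (hpb _ hprjmem).2; rw [hpv] at h; exact h
        obtain ⟨hxl, hxr⟩ := abs_le.mp hx
        obtain ⟨hyl, hyr⟩ := abs_le.mp hy
        have hεx : -R ≤ ε*xx ∧ ε*xx ≤ R :=
          abs_le.mp (scaled_abs_le hεpos hε1 hx)
        have hεy : -R ≤ ε*yy ∧ ε*yy ≤ R :=
          abs_le.mp (scaled_abs_le hεpos hε1 hy)
        have hSεx : -(S*R) ≤ S*(ε*xx) ∧ S*(ε*xx) ≤ S*R :=
          abs_le.mp (mul_abs_le hS0.le (scaled_abs_le hεpos hε1 hx))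
        by_cases hsd : sd v = 0
        · have E0 : p' v = (ε * xx, ε * yy - S * (ε * xx)) := by
            rw [ep0 v h1 hsd, hpv]
          rw [E0]
          constructor
          · show |ε * xx| ≤ B + S*R + 2*R + 3
            rw [abs_le]; constructor <;> [linarith [hεx.1]; linarith [hεx.2]]
          · show |ε * yy - S * (ε * xx)| ≤ B + S*R + 2*R + 3
            rw [abs_le]
            constructor <;> [linarith [hεy.1, hSεx.2]; linarith [hεy.2, hSεx.1]]
        · have E1 : p' v = (1 + ε * xx, ε * yy + S * (ε * xx)) := by
            rw [ep1 v h1 hsd, hpv]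
          rw [E1]
          constructor
          · show |1 + ε * xx| ≤ B + S*R + 2*R + 3
            rw [abs_le]; constructor <;> [linarith [hεx.1]; linarith [hεx.2]]
          · show |ε * yy + S * (ε * xx)| ≤ B + S*R + 2*R + 3
            rw [abs_le]
            constructor <;> [linarith [hεy.1, hSεx.1]; linarith [hεy.2, hSεx.2]]
    · -- line bounds
      intro l hl
      simp only [treeLeaves, Finset.mem_Ico] at hl
      obtain ⟨hsdl, hprjmem⟩ := leaffacts l hl.1 hl.2
      obtain ⟨aa, bb, habl⟩ : ∃ a b, ab (prj l) = (a, b) := ⟨_, _, rfl⟩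
      have ha : |aa| ≤ M := by
        have h := (habb _ hprjmem).1; rw [habl] at h; exact h
      have hb : |bb| ≤ C := by
        have h := (habb _ hprjmem).2; rw [habl] at h; exact h
      obtain ⟨hal, har⟩ := abs_le.mp ha
      obtain ⟨hbl, hbr⟩ := abs_le.mp hb
      have hεb : -(ε*C) ≤ ε*bb ∧ ε*bb ≤ ε*C :=
        abs_le.mp (by rw [abs_mul, abs_of_pos hεpos]
                      exact mul_le_mul_of_nonneg_left hb hεpos.le)
      have hεC0 : 0 ≤ ε*C := by positivity
      by_cases hsd : sd l = 0
      · have Ea : ab' l = (aa - S, ε * bb) := by rw [ea0 l hsd, habl]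
        rw [Ea]
        constructor
        · show |aa - S| ≤ M + S
          rw [abs_le]; constructor <;> linarith
        · show |ε * bb| ≤ ε*C + M + S + 1
          rw [abs_le]; constructor <;> [linarith [hεb.1]; linarith [hεb.2]]
      · have Ea : ab' l = (aa + S, ε * bb - aa - S) := by rw [ea1 l hsd, habl]
        rw [Ea]
        constructor
        · show |aa + S| ≤ M + S
          rw [abs_le]; constructor <;> linarith
        · show |ε * bb - aa - S| ≤ ε*C + M + S + 1
          rw [abs_le]; constructor <;> [linarith [hεb.1]; linarith [hεb.2]]
    · -- main separation
      intro l hl v hv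
      simp only [treeLeaves, Finset.mem_Ico] at hl
      simp only [treeNodes, Finset.mem_Ico] at hv
      have hl1 : 2 ^ (β + 1) ≤ l := hl.1
      have hl2 : l < 2 ^ (β + 2) := hl.2
      obtain ⟨hsdl, hprjlmem⟩ := leaffacts l hl1 hl2
      obtain ⟨aa, bb, habl⟩ : ∃ a b, ab (prj l) = (a, b) := ⟨_, _, rfl⟩
      have ha : |aa| ≤ M := by
        have h := (habb _ hprjlmem).1; rw [habl] at h; exact h
      have hb : |bb| ≤ C := by
        have h := (habb _ hprjlmem).2; rw [habl] at h; exact h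
      obtain ⟨hal, har⟩ := abs_le.mp ha
      obtain ⟨hbl, hbr⟩ := abs_le.mp hb
      have hεb : |ε * bb| ≤ 1/2 - ε := by
        apply habs
        exact le_trans hb (by linarith)
      obtain ⟨hεbl, hεbr⟩ := abs_le.mp hεb
      by_cases h1 : v = 1
      · subst h1
        have hroot : onPath (β + 1) l 1 := root_onPath hl1 hl2
        refine ⟨fun _ => ?_, fun h => absurd hroot h⟩
        rw [ep_root]
        by_cases hsd : sd l = 0
        · have Ea : ab' l = (aa - S, ε * bb) := by rw [ea0 l hsd, habl]
          rw [Ea]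
          show -B + δ' < (aa - S) * 0 + ε * bb
          linarith
        · have Ea : ab' l = (aa + S, ε * bb - aa - S) := by rw [ea1 l hsd, habl]
          rw [Ea]
          show -B + δ' < (aa + S) * 0 + (ε * bb - aa - S)
          linarith
      · have hv2 : 2 ≤ v := by omega
        obtain ⟨hs1, hsle, hls, hus, hsdv, hprjvmem⟩ := nodefacts v hv2 hv.2
        obtain ⟨xx, yy, hpv⟩ : ∃ x y, p (prj v) = (x, y) := ⟨_, _, rfl⟩
        have hx : |xx| ≤ R := by
          have h := (hpb _ hprjvmem).1; rw [hpv] at h; exact h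
        have hy : |yy| ≤ R := by
          have h := (hpb _ hprjvmem).2; rw [hpv] at h; exact h
        obtain ⟨hxl, hxr⟩ := abs_le.mp hx
        obtain ⟨hyl, hyr⟩ := abs_le.mp hy
        have hstep := onPath_step hl1 hl2 hv2 hv.2
        have holdv := hmain (prj l) hprjlmem (prj v) hprjvmem
        rw [habl, hpv] at holdv
        have hold : (onPath β (prj l) (prj v) → yy + δ < aa * xx + bb) ∧
            (¬ onPath β (prj l) (prj v) → aa * xx + bb + δ < yy) := holdv
        by_cases hss : sd v = sd l
        · -- same side
          have hkey : (p' v).2 - ((ab' l).1 * (p' v).1 + (ab' l).2)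
              = ε * (yy - (aa * xx + bb)) := by
            by_cases hsd : sd l = 0
            · have E0 : p' v = (ε * xx, ε * yy - S * (ε * xx)) := by
                rw [ep0 v h1 (hss.trans hsd), hpv]
              have Ea : ab' l = (aa - S, ε * bb) := by rw [ea0 l hsd, habl]
              rw [E0, Ea]
              show ε * yy - S * (ε * xx) - ((aa - S) * (ε * xx) + ε * bb)
                  = ε * (yy - (aa * xx + bb))
              ring
            · have hsdv1 : sd v ≠ 0 := fun h => hsd (hss.symm.trans h)
              have E1 : p' v = (1 + ε * xx, ε * yy + S * (ε * xx)) := by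
                rw [ep1 v h1 hsdv1, hpv]
              have Ea : ab' l = (aa + S, ε * bb - aa - S) := by rw [ea1 l hsd, habl]
              rw [E1, Ea]
              show ε * yy + S * (ε * xx)
                  - ((aa + S) * (1 + ε * xx) + (ε * bb - aa - S))
                  = ε * (yy - (aa * xx + bb))
              ring
          constructor
          · intro hop
            have hpold : onPath β (prj l) (prj v) := (hstep.mp hop).2
            have h2 := hold.1 hpold
            have h3 : ε * (yy - (aa * xx + bb)) < ε * (-δ) :=
              mul_lt_mul_of_pos_left (by linarith) hεpos
            have h4 : ε * (-δ) = -(ε*δ) := by ring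
            linarith [hkey, h3, h4, hδ'εδ]
          · intro hop
            have hpold : ¬ onPath β (prj l) (prj v) := fun hcon =>
              hop (hstep.mpr ⟨hss, hcon⟩)
            have h2 := hold.2 hpold
            have h3 : ε * δ < ε * (yy - (aa * xx + bb)) :=
              mul_lt_mul_of_pos_left (by linarith) hεpos
            linarith [hkey, h3, hδ'εδ]
        · -- different side
          have hnop : ¬ onPath (β + 1) l v := fun hcon => hss (hstep.mp hcon).1
          refine ⟨fun hop => absurd hop hnop, fun _ => ?_⟩
          have habs4 : ∀ u : ℝ, |u| ≤ 2*S*R → |ε*(yy - aa*xx - bb + u)| ≤ 1/2 - ε := by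
            intro u hu
            apply habs
            have e1 : |aa*xx| ≤ M*R := by
              rw [abs_mul]; exact mul_le_mul ha hx (abs_nonneg _) hM
            have e0 : yy - aa*xx - bb + u = yy + -(aa*xx) + -bb + u := by ring
            rw [e0]
            calc |yy + -(aa*xx) + -bb + u| ≤ |yy + -(aa*xx) + -bb| + |u| := abs_add_le _ _
              _ ≤ |yy + -(aa*xx)| + |-bb| + |u| := by linarith [abs_add_le (yy + -(aa*xx)) (-bb)]
              _ ≤ |yy| + |-(aa*xx)| + |-bb| + |u| := by linarith [abs_add_le yy (-(aa*xx))]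
              _ = |yy| + |aa*xx| + |bb| + |u| := by rw [abs_neg, abs_neg]
              _ ≤ R + M*R + C + 2*S*R := by linarith [e1, hy, hb]
              _ = R + 2*S*R + M*R + C := by ring
          have hu1 : |2*S*xx| ≤ 2*S*R := by
            have := mul_abs_le (by linarith : (0:ℝ) ≤ 2*S) hx
            calc |2*S*xx| = |(2*S)*xx| := by ring_nf
              _ ≤ (2*S)*R := this
              _ = 2*S*R := by ring
          by_cases hsd : sd l = 0
          · -- leaf left, node right
            have hsdv1 : sd v ≠ 0 := fun h => hss (h.trans hsd.symm)
            have E1 : p' v = (1 + ε * xx, ε * yy + S * (ε * xx)) := by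
              rw [ep1 v h1 hsdv1, hpv]
            have Ea : ab' l = (aa - S, ε * bb) := by rw [ea0 l hsd, habl]
            rw [E1, Ea]
            show (aa - S) * (1 + ε * xx) + ε * bb + δ' < ε * yy + S * (ε * xx)
            have hz := habs4 (2*S*xx) hu1
            obtain ⟨hzl, hzr⟩ := abs_le.mp hz
            have expand : (aa - S) * (1 + ε*xx) + ε*bb - (ε*yy + S*(ε*xx))
                = (aa - S) - ε*(yy - aa*xx - bb + 2*S*xx) := by ring
            linarith [expand, hzl, hzr]
          · -- leaf right, node left
            have hsdv0 : sd v = 0 := by omega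
            have E0 : p' v = (ε * xx, ε * yy - S * (ε * xx)) := by
              rw [ep0 v h1 hsdv0, hpv]
            have Ea : ab' l = (aa + S, ε * bb - aa - S) := by rw [ea1 l hsd, habl]
            rw [E0, Ea]
            show (aa + S) * (ε * xx) + (ε * bb - aa - S) + δ' < ε * yy - S * (ε * xx)
            have hu2 : |-(2*S*xx)| ≤ 2*S*R := by rw [abs_neg]; exact hu1
            have hz := habs4 (-(2*S*xx)) hu2
            obtain ⟨hzl, hzr⟩ := abs_le.mp hz
            have expand : (aa + S) * (ε*xx) + (ε*bb - aa - S) - (ε*yy - S*(ε*xx))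
                = -(aa + S) - ε*(yy - aa*xx - bb + -(2*S*xx)) := by ring
            linarith [expand, hzl, hzr]
lemma cross_line {T : Set (ℝ × ℝ)} (hconv : Convex ℝ T) {a b : ℝ} {pt p' : ℝ × ℝ}
    (hpt : pt ∈ T) (hp' : p' ∈ T) (h1 : pt.2 < a * pt.1 + b) (h2 : a * p'.1 + b < p'.2) :
    (lineSet a b ∩ T).Nonempty := by
  set g1 : ℝ := a * pt.1 + b - pt.2 with hg1
  set g2 : ℝ := p'.2 - (a * p'.1 + b) with hg2
  have hg1pos : 0 < g1 := by rw [hg1]; linarith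
  have hg2pos : 0 < g2 := by rw [hg2]; linarith
  have hg12 : 0 < g1 + g2 := by linarith
  set s : ℝ := g1 / (g1 + g2) with hs
  have hs0 : 0 ≤ s := by positivity
  have hs1 : s ≤ 1 := by
    rw [hs, div_le_one hg12]; linarith
  have hsum : s * (g1 + g2) = g1 := by
    rw [hs]; field_simp
  refine ⟨(1 - s) • pt + s • p', ?_, hconv hpt hp' (by linarith) hs0 (by ring)⟩
  show ((1 - s) • pt + s • p').2 = a * ((1 - s) • pt + s • p').1 + b
  have e1 : ((1 - s) • pt + s • p').1 = (1 - s) * pt.1 + s * p'.1 := rfl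
  have e2 : ((1 - s) • pt + s • p').2 = (1 - s) * pt.2 + s * p'.2 := rfl
  rw [e1, e2]
  have hgg1 : g1 = a * pt.1 + b - pt.2 := hg1
  have hgg2 : g2 = p'.2 - (a * p'.1 + b) := hg2
  rw [hgg1, hgg2] at hsum
  linear_combination hsum

/-- shallow partitions yield tree multi-colorings.
Let `m = 2^β`, let `k` be a multiple of `β + 1`, and set
`n = (2m - 1) · k/(β+1)`.  If `A` is such that every `n`-point planar set in
general position admits a `k`-partition with crossing number at most `A`,
then the complete binary tree of height `β` has a multi-coloring in which
every node carries exactly `k/(β+1)` colors, every color class has size at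
most `k`, and every root-leaf path meets at most `A + 1` distinct colors. -/
theorem statement3 (β k A : ℕ) (hk : (β + 1) ∣ k)
    (hA : ∀ P : Finset (ℝ × ℝ),
      P.card = (2 * 2 ^ β - 1) * (k / (β + 1)) → GenPos2 P →
      ∃ (parts : Fin (((2 * 2 ^ β - 1) * (k / (β + 1)) + k - 1) / k) → Finset (ℝ × ℝ))
        (tri : Fin (((2 * 2 ^ β - 1) * (k / (β + 1)) + k - 1) / k) → Fin 3 → ℝ × ℝ),
        IsKPartition P ((2 * 2 ^ β - 1) * (k / (β + 1))) k parts tri ∧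
          ∀ a b : ℝ, IsShallow P k a b → crossCount tri a b ≤ A) :
    ∃ c : ℕ → Multiset ℕ,
      (∀ v ∈ treeNodes β, Multiset.card (c v) = k / (β + 1)) ∧
      (∀ col : ℕ, (∑ v ∈ treeNodes β, (c v).count col) ≤ k) ∧
      (∀ l ∈ treeLeaves β, (pathColors β c l).card ≤ A + 1) := by
  by_cases hk0 : k = 0
  · subst hk0
    refine ⟨fun _ => 0, ?_, ?_, ?_⟩
    · intro v _; simp
    · intro col; simp
    · intro l _
      have : pathColors β (fun _ => 0) l = ∅ := by
        apply Finset.eq_empty_of_forall_notMem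
        intro x hx
        obtain ⟨t, _, hmem⟩ := Finset.mem_biUnion.mp hx
        simp at hmem
      rw [this]
      simp
  · have hkpos : 0 < k := Nat.pos_of_ne_zero hk0
    set q := k / (β + 1) with hq_def2
    have hq_def : q = k / (β + 1) := hq_def2
    have hq : (β + 1) * q = k := by rw [hq_def]; exact Nat.mul_div_cancel' hk
    have hqpos : 0 < q := by
      rcases Nat.eq_zero_or_pos q with h | h
      · rw [h, Nat.mul_zero] at hq; omega
      · exact h
    set n := (2 * 2 ^ β - 1) * q with hn_def
    have h2pow : (1:ℕ) ≤ 2 ^ β := Nat.one_le_two_pow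
    have hnpos : 0 < n := by
      rw [hn_def]; exact Nat.mul_pos (by omega) hqpos
    obtain ⟨D, hD⟩ : ∃ D, D = n / k := ⟨_, rfl⟩
    have hDN : D ≤ (n + k - 1) / k := by
      rw [hD]
      exact Nat.div_le_div_right (by omega)
    have hNle : (n + k - 1) / k ≤ D + 1 := by
      have hdm := Nat.div_add_mod n k
      have hmod : n % k < k := Nat.mod_lt _ hkpos
      have hlt : (n + k - 1) / k < D + 2 := by
        rw [hD, Nat.div_lt_iff_lt_mul hkpos]
        have hexp : (n / k + 2) * k = k * (n / k) + 2 * k := by ring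
        omega
      omega
    -- geometry
    obtain ⟨p, ab, δ, M, R, C, hδ, hM, hR, hC, hpb, habb, hmain⟩ := construction β
    obtain ⟨w, hw_def⟩ : ∃ w : ℝ, w = δ / (2 * (M + 1)) := ⟨_, rfl⟩
    have hwpos : 0 < w := by rw [hw_def]; positivity
    have hwM : w * (M + 1) = δ / 2 := by
      rw [hw_def]; field_simp
    obtain ⟨f, hbox, hinjx, hcoll⟩ :=
      placement ((treeNodes β) ×ˢ (Finset.range q)) (fun ij => p ij.1) w hwpos
    set idx := (treeNodes β) ×ˢ (Finset.range q) with hidx_def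
    have hfne : ∀ i ∈ idx, ∀ j ∈ idx, i ≠ j → f i ≠ f j := by
      intro i hi j hj hij heq
      exact hinjx i hi j hj hij (by rw [heq])
    have hfinj : Set.InjOn f ↑idx := by
      intro i hi j hj heq
      by_contra hne
      exact hfne i (Finset.mem_coe.mp hi) j (Finset.mem_coe.mp hj) hne heq
    set P := idx.image f with hP_def
    have hTcard : (treeNodes β).card = 2 ^ (β + 1) - 1 := by
      simp [treeNodes]
    have hPcard : P.card = n := by
      rw [hP_def, Finset.card_image_of_injOn hfinj, Finset.card_product,
        Finset.card_range, hTcard, hn_def]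
      congr 1
      have : 2 ^ (β + 1) = 2 * 2 ^ β := by ring
      omega
    have hgen : GenPos2 P := by
      intro p1 hp1 p2 hp2 p3 hp3 h12 h23 h13
      obtain ⟨i1, hi1, rfl⟩ := Finset.mem_image.mp hp1
      obtain ⟨i2, hi2, rfl⟩ := Finset.mem_image.mp hp2
      obtain ⟨i3, hi3, rfl⟩ := Finset.mem_image.mp hp3
      exact hcoll i1 hi1 i2 hi2 i3 hi3 (fun h => h12 (by rw [h]))
        (fun h => h23 (by rw [h])) (fun h => h13 (by rw [h]))
    have hmemP : ∀ v ∈ treeNodes β, ∀ j ∈ Finset.range q, f (v, j) ∈ P := by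
      intro v hv j hj
      exact Finset.mem_image_of_mem f (Finset.mem_product.mpr ⟨hv, hj⟩)
    -- separation for actual points
    have hsep : ∀ l ∈ treeLeaves β, ∀ v ∈ treeNodes β, ∀ j ∈ Finset.range q,
        (onPath β l v → (f (v, j)).2 < (ab l).1 * (f (v, j)).1 + (ab l).2) ∧
        (¬ onPath β l v → (ab l).1 * (f (v, j)).1 + (ab l).2 < (f (v, j)).2) := by
      intro l hl v hv j hj
      have hij : (v, j) ∈ idx := Finset.mem_product.mpr ⟨hv, hj⟩
      obtain ⟨hbx, hby⟩ := hbox (v, j) hij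
      obtain ⟨ha, _⟩ := habb l hl
      obtain ⟨hbxl, hbxr⟩ := abs_lt.mp hbx
      obtain ⟨hbyl, hbyr⟩ := abs_lt.mp hby
      have hadx : |(ab l).1 * ((f (v, j)).1 - (p v).1)| ≤ M * w := by
        rw [abs_mul]
        exact mul_le_mul ha (le_of_lt hbx) (abs_nonneg _) hM
      obtain ⟨hadxl, hadxr⟩ := abs_le.mp hadx
      have hsep' := hmain l hl v hv
      have e : (ab l).1 * (f (v, j)).1
          = (ab l).1 * (p v).1 + (ab l).1 * ((f (v, j)).1 - (p v).1) := by ring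
      constructor
      · intro hop
        have h0 := hsep'.1 hop
        linarith [h0, hbyr, hadxl, e, hwM, hδ]
      · intro hop
        have h0 := hsep'.2 hop
        linarith [h0, hbyl, hadxr, e, hwM, hδ]
    -- apply hypothesis
    obtain ⟨parts, tri, hpart, hcross⟩ := hA P hPcard hgen
    have hcover := hpart.cover
    have hdisj := hpart.disjoint
    have hsize := hpart.size
    have htri := hpart.inTriangle
    have hsize' : ∀ i : Fin ((n + k - 1) / k), (i : ℕ) < D → (parts i).card = k := by
      intro i hi
      exact hsize i (lt_of_lt_of_eq hi hD)
    have hpartsub : ∀ i, parts i ⊆ P := by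
      intro i x hx
      rw [← hcover]
      exact Finset.mem_biUnion.mpr ⟨i, Finset.mem_univ _, hx⟩
    have hsumcard : ∑ i, (parts i).card = n := by
      have hbc : (Finset.univ.biUnion parts).card = ∑ i, (parts i).card :=
        Finset.card_biUnion (fun i _ j _ hij => hdisj i j hij)
      rw [hcover, hPcard] at hbc
      exact hbc.symm
    have hFcard : (Finset.univ.filter
        (fun j : Fin ((n + k - 1) / k) => (j : ℕ) < D)).card = D := by
      have hmem : ∀ m ∈ Finset.range D, m < (n + k - 1) / k := fun m hm =>
        lt_of_lt_of_le (Finset.mem_range.mp hm) hDN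
      have heq : (Finset.univ.filter (fun j : Fin ((n + k - 1) / k) => (j : ℕ) < D))
          = (Finset.range D).attachFin hmem := by
        ext j
        simp [Finset.mem_attachFin]
      rw [heq, Finset.card_attachFin, Finset.card_range]
    have hcardle : ∀ i, (parts i).card ≤ k := by
      intro i
      by_cases hi : (i : ℕ) < D
      · exact le_of_eq (hsize' i hi)
      · have hiF : i ∉ Finset.univ.filter
            (fun j : Fin ((n + k - 1) / k) => (j : ℕ) < D) := by simp [hi]
        have h1 : ∑ j ∈ insert i (Finset.univ.filter
              (fun j : Fin ((n + k - 1) / k) => (j : ℕ) < D)), (parts j).card ≤ n := by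
          have h1' := Finset.sum_le_sum_of_subset (f := fun j => (parts j).card)
            (Finset.subset_univ (insert i (Finset.univ.filter
              (fun j : Fin ((n + k - 1) / k) => (j : ℕ) < D))))
          have h1'' : ∑ j ∈ insert i (Finset.univ.filter
              (fun j : Fin ((n + k - 1) / k) => (j : ℕ) < D)), (parts j).card
              ≤ ∑ j, (parts j).card := h1'
          omega
        rw [Finset.sum_insert hiF] at h1
        have h2 : ∑ j ∈ Finset.univ.filter
              (fun j : Fin ((n + k - 1) / k) => (j : ℕ) < D), (parts j).card = D * k := by
          rw [Finset.sum_congr rfl (fun j hj => hsize' j (Finset.mem_filter.mp hj).2),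
            Finset.sum_const, hFcard, smul_eq_mul]
        have hdm : k * (n / k) + n % k = n := Nat.div_add_mod n k
        have hmod : n % k < k := Nat.mod_lt _ hkpos
        rw [← hD] at hdm
        have hcomm : k * D = D * k := Nat.mul_comm _ _
        rw [hcomm] at hdm
        omega
    -- coloring
    set colorOf : ℝ × ℝ → ℕ := fun pt =>
      if h : ∃ i : Fin ((n + k - 1) / k), pt ∈ parts i then ((h.choose : Fin ((n + k - 1) / k)) : ℕ) else 0
      with hcolor_def
    have hcolorex : ∀ pt ∈ P, ∃ i : Fin ((n + k - 1) / k), pt ∈ parts i := by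
      intro pt hpt
      rw [← hcover] at hpt
      obtain ⟨i, _, hi⟩ := Finset.mem_biUnion.mp hpt
      exact ⟨i, hi⟩
    have hcolor_spec : ∀ pt ∈ P, ∀ i : Fin ((n + k - 1) / k), (i : ℕ) = colorOf pt → pt ∈ parts i := by
      intro pt hpt i hi
      have hex := hcolorex pt hpt
      rw [hcolor_def] at hi
      simp only [dif_pos hex] at hi
      have : i = hex.choose := Fin.ext hi
      rw [this]
      exact hex.choose_spec
    have hcolor_lt : ∀ pt ∈ P, colorOf pt < (n + k - 1) / k := by
      intro pt hpt
      have hex := hcolorex pt hpt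
      rw [hcolor_def]
      simp only [dif_pos hex]
      exact (hex.choose).isLt
    set c : ℕ → Multiset ℕ :=
      fun v => Multiset.map (fun j => colorOf (f (v, j))) (Finset.range q).val
      with hc_def
    have hcount : ∀ v col, (c v).count col
        = ((Finset.range q).filter (fun j => col = colorOf (f (v, j)))).card := by
      intro v col
      rw [hc_def]
      rw [Multiset.count_map]
      rfl
    refine ⟨c, ?_, ?_, ?_⟩
    · intro v _
      rw [hc_def]
      simp
    · -- color class sizes
      intro col
      by_cases hcol : col < (n + k - 1) / k
      · set i0 : Fin ((n + k - 1) / k) := ⟨col, hcol⟩ with hi0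
        set blockF : ℕ → Finset (ℝ × ℝ) :=
          fun v => (Finset.range q).image (fun j => f (v, j)) with hblock_def
        have hblockdisj : ∀ v ∈ treeNodes β, ∀ v' ∈ treeNodes β, v ≠ v' →
            Disjoint (parts i0 ∩ blockF v) (parts i0 ∩ blockF v') := by
          intro v hv v' hv' hne
          rw [Finset.disjoint_left]
          intro pt hpt hpt'
          obtain ⟨j, hj, hje⟩ := Finset.mem_image.mp (Finset.mem_inter.mp hpt).2
          obtain ⟨j', hj', hje'⟩ := Finset.mem_image.mp (Finset.mem_inter.mp hpt').2
          have : f (v, j) = f (v', j') := by rw [hje, hje']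
          exact hfne (v, j) (Finset.mem_product.mpr ⟨hv, hj⟩)
            (v', j') (Finset.mem_product.mpr ⟨hv', hj'⟩)
            (fun h => hne (congrArg Prod.fst h)) this
        have hperV : ∀ v ∈ treeNodes β, (c v).count col ≤ (parts i0 ∩ blockF v).card := by
          intro v hv
          rw [hcount v col]
          apply Finset.card_le_card_of_injOn (fun j => f (v, j))
          · intro j hj
            obtain ⟨hjq, hjc⟩ := Finset.mem_filter.mp hj
            refine Finset.mem_inter.mpr ⟨?_, Finset.mem_image_of_mem _ hjq⟩
            exact hcolor_spec (f (v, j)) (hmemP v hv j hjq) i0 hjc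
          · intro j hj j' hj' heq
            have hjq := (Finset.mem_filter.mp (Finset.mem_coe.mp hj)).1
            have hjq' := (Finset.mem_filter.mp (Finset.mem_coe.mp hj')).1
            by_contra hne
            exact hfne (v, j) (Finset.mem_product.mpr ⟨hv, hjq⟩)
              (v, j') (Finset.mem_product.mpr ⟨hv, hjq'⟩)
              (fun h => hne (congrArg Prod.snd h)) heq
        calc ∑ v ∈ treeNodes β, (c v).count col
            ≤ ∑ v ∈ treeNodes β, (parts i0 ∩ blockF v).card :=
              Finset.sum_le_sum hperV
          _ = ((treeNodes β).biUnion (fun v => parts i0 ∩ blockF v)).card :=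
              (Finset.card_biUnion hblockdisj).symm
          _ ≤ (parts i0).card := Finset.card_le_card
              (Finset.biUnion_subset.mpr (fun v _ => Finset.inter_subset_left))
          _ ≤ k := hcardle i0
      · have hzero : ∀ v ∈ treeNodes β, (c v).count col = 0 := by
          intro v hv
          rw [hcount v col, Finset.card_eq_zero, Finset.filter_eq_empty_iff]
          intro j hj heq
          have hlt := hcolor_lt (f (v, j)) (hmemP v hv j hj)
          omega
        rw [Finset.sum_eq_zero hzero]
        exact Nat.zero_le k
    · -- path colors
      intro l hl
      have hlI := hl
      simp only [treeLeaves, Finset.mem_Ico] at hlI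
      have hl1 : 2 ^ β ≤ l := hlI.1
      have hl2 : l < 2 ^ (β + 1) := hlI.2
      have hpathmem : ∀ t, t ≤ β → l / 2 ^ t ∈ treeNodes β ∧ onPath β l (l / 2 ^ t) := by
        intro t ht
        have hdr := div_range hl1 hl2 ht
        refine ⟨?_, ⟨t, ht, rfl⟩⟩
        simp only [treeNodes, Finset.mem_Ico]
        have hp1 : (1:ℕ) ≤ 2 ^ (β - t) := Nat.one_le_two_pow
        have hp2 : (2:ℕ) ^ (β - t + 1) ≤ 2 ^ (β + 1) :=
          Nat.pow_le_pow_right (by norm_num) (by omega)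
        omega
      have hdivinj : Set.InjOn (fun t => l / 2 ^ t) ↑(Finset.range (β + 1)) := by
        intro t ht t' ht' heq
        simp only [Finset.coe_range, Set.mem_Iio] at ht ht'
        have heq' : l / 2 ^ t = l / 2 ^ t' := heq
        by_contra hne
        have haux : ∀ s s', s < s' → s' ≤ β → l / 2 ^ s' < l / 2 ^ s := by
          intro s s' hss hs'
          have d1 := div_range hl1 hl2 (by omega : s ≤ β)
          have d2 := div_range hl1 hl2 hs'
          have hpow : (2:ℕ) ^ (β - s' + 1) ≤ 2 ^ (β - s) :=
            Nat.pow_le_pow_right (by norm_num) (by omega)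
          omega
        rcases Nat.lt_or_ge t t' with h | h
        · have := haux t t' h (by omega); omega
        · have := haux t' t (by omega) (by omega); omega

      set pathF := (Finset.range (β + 1)).image (fun t => l / 2 ^ t) with hpathF
      have hpathcard : pathF.card = β + 1 := by
        rw [hpathF, Finset.card_image_of_injOn hdivinj, Finset.card_range]
      have hpathsub : pathF ⊆ treeNodes β := by
        intro v hv
        obtain ⟨t, ht, rfl⟩ := Finset.mem_image.mp hv
        exact (hpathmem t (by have := Finset.mem_range.mp ht; omega)).1
      set Bfin := P.filter (fun pt => pt ∈ belowSet (ab l).1 (ab l).2) with hB_def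
      have hBeq : Bfin = (pathF ×ˢ Finset.range q).image f := by
        rw [hB_def]
        ext pt
        simp only [Finset.mem_filter, Finset.mem_image, hP_def]
        constructor
        · rintro ⟨⟨ij, hij, rfl⟩, hbel⟩
          obtain ⟨hv, hj⟩ := Finset.mem_product.mp hij
          refine ⟨ij, Finset.mem_product.mpr ⟨?_, hj⟩, rfl⟩
          by_contra hnp
          have hnop : ¬ onPath β l ij.1 := by
            rintro ⟨t, ht, hdiv⟩
            apply hnp
            rw [hpathF]
            exact Finset.mem_image.mpr ⟨t, Finset.mem_range.mpr (by omega), hdiv⟩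
          have habove := (hsep l hl ij.1 hv ij.2 hj).2 hnop
          have hbel' : (f ij).2 < (ab l).1 * (f ij).1 + (ab l).2 := hbel
          linarith
        · rintro ⟨ij, hij, rfl⟩
          obtain ⟨hvp, hj⟩ := Finset.mem_product.mp hij
          have hv := hpathsub hvp
          rw [hpathF] at hvp
          obtain ⟨t, ht, hdiv⟩ := Finset.mem_image.mp hvp
          have hop : onPath β l ij.1 := ⟨t, by have := Finset.mem_range.mp ht; omega, hdiv⟩
          refine ⟨⟨ij, Finset.mem_product.mpr ⟨hv, hj⟩, rfl⟩, ?_⟩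
          exact (hsep l hl ij.1 hv ij.2 hj).1 hop
      have hBcard : Bfin.card = k := by
        rw [hBeq,
          Finset.card_image_of_injOn (hfinj.mono (by
            intro x hx
            simp only [Finset.coe_subset, Finset.mem_coe] at *
            obtain ⟨hv, hj⟩ := Finset.mem_product.mp hx
            exact Finset.mem_product.mpr ⟨hpathsub hv, hj⟩)),
          Finset.card_product, hpathcard, Finset.card_range, ← hq]
      have hnotline : ∀ pt ∈ P, pt ∉ lineSet (ab l).1 (ab l).2 := by
        intro pt hpt hline
        obtain ⟨ij, hij, rfl⟩ := Finset.mem_image.mp hpt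
        obtain ⟨hv, hj⟩ := Finset.mem_product.mp hij
        have hline' : (f ij).2 = (ab l).1 * (f ij).1 + (ab l).2 := hline
        by_cases hop : onPath β l ij.1
        · have := (hsep l hl ij.1 hv ij.2 hj).1 hop; linarith
        · have := (hsep l hl ij.1 hv ij.2 hj).2 hop; linarith
      have hshallow : IsShallow P k (ab l).1 (ab l).2 :=
        ⟨hnotline, le_of_eq hBcard⟩
      have hcrossle := hcross (ab l).1 (ab l).2 hshallow
      set S1 := Finset.univ.filter
        (fun i : Fin ((n + k - 1) / k) => (lineSet (ab l).1 (ab l).2 ∩ triangle (tri i)).Nonempty)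
        with hS1
      set S2 := Finset.univ.filter
        (fun i : Fin ((n + k - 1) / k) => (parts i).Nonempty ∧ parts i ⊆ Bfin) with hS2
      have hS2card : S2.card ≤ 1 := by
        rw [Finset.card_le_one]
        intro i hi j hj
        simp only [hS2, Finset.mem_filter] at hi hj
        by_contra hne
        have hd := hdisj i j hne
        have hcardsum : (parts i).card + (parts j).card ≤ k := by
          rw [← hBcard, ← Finset.card_union_of_disjoint hd]
          exact Finset.card_le_card (Finset.union_subset hi.2.2 hj.2.2)
        have hipos : 0 < (parts i).card := hi.2.1.card_pos
        have hjpos : 0 < (parts j).card := hj.2.1.card_pos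
        by_cases h1 : (i : ℕ) < D
        · have := hsize' i h1; omega
        · by_cases h2 : (j : ℕ) < D
          · have := hsize' j h2; omega
          · have hieq : (i : ℕ) = (j : ℕ) := by
              have hi' := i.isLt
              have hj' := j.isLt
              omega
            exact hne (Fin.ext hieq)
      have hsubset : pathColors β c l ⊆ (S1 ∪ S2).image (fun i : Fin ((n + k - 1) / k) => (i : ℕ)) := by
        intro col hcol
        obtain ⟨t, htr, hct⟩ := Finset.mem_biUnion.mp hcol
        have ht : t ≤ β := by have := Finset.mem_range.mp htr; omega
        have hct' : col ∈ Multiset.map (fun j => colorOf (f (l / 2 ^ t, j)))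
            (Finset.range q).val := by
          rw [Multiset.mem_toFinset] at hct
          exact hct
        obtain ⟨j, hjv, heq0⟩ := Multiset.mem_map.mp hct'
        have heq : colorOf (f (l / 2 ^ t, j)) = col := heq0
        have hj : j ∈ Finset.range q := hjv
        obtain ⟨hvmem, hop⟩ := hpathmem t ht
        have hptP : f (l / 2 ^ t, j) ∈ P := hmemP _ hvmem j hj
        have hcollt : col < (n + k - 1) / k := heq ▸ hcolor_lt _ hptP
        set i0 : Fin ((n + k - 1) / k) := ⟨col, hcollt⟩ with hi0d
        have hpti0 : f (l / 2 ^ t, j) ∈ parts i0 :=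
          hcolor_spec _ hptP i0 (by rw [hi0d]; exact heq.symm)
        have hbelow : (f (l / 2 ^ t, j)).2
            < (ab l).1 * (f (l / 2 ^ t, j)).1 + (ab l).2 :=
          (hsep l hl _ hvmem j hj).1 hop
        refine Finset.mem_image.mpr ⟨i0, ?_, rfl⟩
        rw [Finset.mem_union]
        by_cases hcr : (lineSet (ab l).1 (ab l).2 ∩ triangle (tri i0)).Nonempty
        · left; rw [hS1]; exact Finset.mem_filter.mpr ⟨Finset.mem_univ _, hcr⟩
        · right; rw [hS2]
          refine Finset.mem_filter.mpr ⟨Finset.mem_univ _, ⟨_, hpti0⟩, ?_⟩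
          intro p' hp'
          rw [hB_def, Finset.mem_filter]
          refine ⟨hpartsub i0 hp', ?_⟩
          by_contra hnb
          have hnl := hnotline p' (hpartsub i0 hp')
          have hge : (ab l).1 * p'.1 + (ab l).2 ≤ p'.2 := by
            by_contra hlt
            exact hnb (by simpa [belowSet] using not_le.mp hlt)
          have hne2 : p'.2 ≠ (ab l).1 * p'.1 + (ab l).2 := hnl
          have habove : (ab l).1 * p'.1 + (ab l).2 < p'.2 :=
            lt_of_le_of_ne hge (fun h => hne2 h.symm)
          exact hcr (cross_line (convex_convexHull ℝ _)
            (htri i0 hpti0) (htri i0 hp') hbelow habove)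
      have hS1eq : S1.card = crossCount tri (ab l).1 (ab l).2 := rfl
      calc (pathColors β c l).card
          ≤ ((S1 ∪ S2).image (fun i : Fin ((n + k - 1) / k) => (i : ℕ))).card :=
            Finset.card_le_card hsubset
        _ ≤ (S1 ∪ S2).card := Finset.card_image_le
        _ ≤ S1.card + S2.card := Finset.card_union_le _ _
        _ ≤ A + 1 := by omega

end
end

section
/- Let T be the complete binary tree of height β with a multi-coloring of its nodes, and suppose the levels 0,…,β of T are partitioned into b consecutive blocks (slices) S₁,…,S_b from top to bottom. Suppose that for every i ∈ {1,…,b−1} and every node z in the top level of slice S_i, the set of descendants of z lying within slice S_i (a complete subtree with root z whose leaves are at the bottom level of S_i) carries at least i distinct colors. Then there exists a root-leaf path of T along which at least b − 1 distinct colors appear. -/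
open scoped Classical

/-- Colors on the root path to node `z`. -/
def ancColors (col : ℕ → Multiset ℕ) (z : ℕ) : Finset ℕ :=
  (Finset.range (Nat.log 2 z + 1)).biUnion fun t => (col (z / 2 ^ t)).toFinset

lemma log_mul_pow (z k : ℕ) (hz : 1 ≤ z) :
    Nat.log 2 (z * 2 ^ k) = Nat.log 2 z + k := by
  refine Nat.log_eq_of_pow_le_of_lt_pow ?_ ?_
  · rw [pow_add]
    exact Nat.mul_le_mul_right _ (Nat.pow_log_le_self 2 (by omega))
  · rw [show Nat.log 2 z + k + 1 = (Nat.log 2 z + 1) + k by omega, pow_add]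
    have := Nat.lt_pow_succ_log_self (b := 2) one_lt_two z
    have h2 : 0 < 2 ^ k := pow_pos (by norm_num) k
    exact Nat.mul_lt_mul_of_lt_of_le this (le_refl _) h2

lemma ancColors_mul_pow (col : ℕ → Multiset ℕ) (z k : ℕ) (hz : 1 ≤ z) :
    ancColors col z ⊆ ancColors col (z * 2 ^ k) := by
  intro x hx
  simp only [ancColors, Finset.mem_biUnion, Finset.mem_range] at hx ⊢
  obtain ⟨t, ht, hx⟩ := hx
  refine ⟨k + t, ?_, ?_⟩
  · rw [log_mul_pow z k hz]; omega
  · rwa [pow_add, ← Nat.div_div_eq_div_mul,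
      Nat.mul_div_cancel _ (pow_pos (by norm_num) k)]

lemma ancColors_of_anc (col : ℕ → Multiset ℕ) (w z s : ℕ) (hz : 1 ≤ z)
    (h : w / 2 ^ s = z) : ancColors col z ⊆ ancColors col w := by
  have hw : z * 2 ^ s ≤ w := by
    have := Nat.div_mul_le_self w (2 ^ s)
    rwa [h] at this
  have hlog : Nat.log 2 z + s ≤ Nat.log 2 w := by
    rw [← log_mul_pow z s hz]; exact Nat.log_mono_right hw
  intro x hx
  simp only [ancColors, Finset.mem_biUnion, Finset.mem_range] at hx ⊢
  obtain ⟨t, ht, hx⟩ := hx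
  refine ⟨s + t, by omega, ?_⟩
  rwa [pow_add, ← Nat.div_div_eq_div_mul, h]

lemma self_mem_ancColors (col : ℕ → Multiset ℕ) (w : ℕ) :
    (col w).toFinset ⊆ ancColors col w := by
  intro x hx
  simp only [ancColors, Finset.mem_biUnion, Finset.mem_range]
  exact ⟨0, by omega, by simpa using hx⟩

/-- building a colorful root-leaf path slice by slice.
Let the levels `0, …, β` of the complete binary tree of height `β` be
partitioned into `b` consecutive slices, the `i`-th slice (for `1 ≤ i ≤ b`)
consisting of levels `e (i-1), …, e i - 1`, where `e 0 = 0`, `e b = β + 1`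
and `e` is strictly increasing on `{0, …, b}`.  Suppose that for each
`i ∈ {1, …, b-1}` and each node `z` on the top level of slice `i`, the
complete subtree of descendants of `z` lying inside slice `i` carries at
least `i` distinct colors.  Then some root-leaf path meets at least `b - 1`
distinct colors. -/
theorem statement7 (β b : ℕ) (hb : 1 ≤ b) (col : ℕ → Multiset ℕ)
    (e : ℕ → ℕ) (he0 : e 0 = 0) (heb : e b = β + 1)
    (hmono : ∀ i j : ℕ, i < j → j ≤ b → e i < e j)
    (hslice : ∀ i : ℕ, 1 ≤ i → i ≤ b - 1 →
      ∀ z ∈ treeNodes β, Nat.log 2 z = e (i - 1) →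
        i ≤ ((((treeNodes β).filter fun w =>
              (∃ t : ℕ, w / 2 ^ t = z) ∧ Nat.log 2 w < e i).biUnion
                fun w => (col w).toFinset).card)) :
    ∃ l ∈ treeLeaves β, b - 1 ≤ (pathColors β col l).card := by
  have main : ∀ i : ℕ, i < b →
      ∃ z : ℕ, 1 ≤ z ∧ Nat.log 2 z = e i ∧ i ≤ (ancColors col z).card := by
    intro i
    induction i with
    | zero =>
      intro _
      exact ⟨1, le_refl 1, by simp [he0], by omega⟩
    | succ i ih =>
      intro hib
      obtain ⟨z, hz1, hzlog, hzcard⟩ := ih (by omega)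
      have hei_lt : e i < e (i + 1) := hmono i (i + 1) (by omega) (by omega)
      have hei1_le : e (i + 1) ≤ β := by
        have := hmono (i + 1) b (by omega) (le_refl b)
        omega
      by_cases hbig : i + 1 ≤ (ancColors col z).card
      · refine ⟨z * 2 ^ (e (i + 1) - e i), Nat.mul_pos hz1 (pow_pos (by norm_num) _), ?_, ?_⟩
        · rw [log_mul_pow z _ hz1, hzlog]; omega
        · exact le_trans hbig (Finset.card_le_card (ancColors_mul_pow col z _ hz1))
      · -- card = i exactly; use hslice to find a new color
        have hzmem : z ∈ treeNodes β := by
          have hlt : z < 2 ^ (Nat.log 2 z + 1) := Nat.lt_pow_succ_log_self one_lt_two z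
          have hei_le : e i ≤ β := by omega
          have : z < 2 ^ (β + 1) := by
            calc z < 2 ^ (Nat.log 2 z + 1) := hlt
            _ ≤ 2 ^ (β + 1) := Nat.pow_le_pow_right (by norm_num) (by omega)
          simp [treeNodes, Finset.mem_Ico]; omega
        have hs := hslice (i + 1) (by omega) (by omega) z hzmem (by simpa using hzlog)
        have hcard_lt : (ancColors col z).card <
            (((treeNodes β).filter fun w =>
              (∃ t : ℕ, w / 2 ^ t = z) ∧ Nat.log 2 w < e (i + 1)).biUnion
                fun w => (col w).toFinset).card := by omega
        have hnsub : ¬ (((treeNodes β).filter fun w =>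
              (∃ t : ℕ, w / 2 ^ t = z) ∧ Nat.log 2 w < e (i + 1)).biUnion
                fun w => (col w).toFinset) ⊆ ancColors col z :=
          fun h => absurd (Finset.card_le_card h) (by omega)
        obtain ⟨x, hxmem, hxnot⟩ := Finset.not_subset.1 hnsub
        simp only [Finset.mem_biUnion, Finset.mem_filter] at hxmem
        obtain ⟨w, ⟨hwT, ⟨t, hwt⟩, hwlog⟩, hxw⟩ := hxmem
        have hw1 : 1 ≤ w := by
          simp [treeNodes, Finset.mem_Ico] at hwT; omega
        have hwanc : ancColors col z ⊆ ancColors col w :=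
          ancColors_of_anc col w z t hz1 hwt
        have hxanc : x ∈ ancColors col w := self_mem_ancColors col w hxw
        refine ⟨w * 2 ^ (e (i + 1) - Nat.log 2 w), Nat.mul_pos hw1 (pow_pos (by norm_num) _), ?_, ?_⟩
        · rw [log_mul_pow w _ hw1]; omega
        · have hsub : insert x (ancColors col z) ⊆ ancColors col (w * 2 ^ (e (i + 1) - Nat.log 2 w)) := by
            intro y hy
            rcases Finset.mem_insert.mp hy with rfl | hy
            · exact ancColors_mul_pow col w _ hw1 hxanc
            · exact ancColors_mul_pow col w _ hw1 (hwanc hy)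
          calc i + 1 ≤ (insert x (ancColors col z)).card := by
                rw [Finset.card_insert_of_notMem hxnot]; omega
            _ ≤ _ := Finset.card_le_card hsub
  obtain ⟨z, hz1, hzlog, hzcard⟩ := main (b - 1) (by omega)
  have heb1 : e (b - 1) ≤ β := by
    have := hmono (b - 1) b (by omega) (le_refl b)
    omega
  set l := z * 2 ^ (β - e (b - 1)) with hl
  have hllog : Nat.log 2 l = β := by
    rw [hl, log_mul_pow z _ hz1, hzlog]; omega
  have hl1 : 1 ≤ l := Nat.mul_pos hz1 (pow_pos (by norm_num) _)
  refine ⟨l, ?_, ?_⟩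
  · simp only [treeLeaves, Finset.mem_Ico]
    constructor
    · have := Nat.pow_log_le_self 2 (show l ≠ 0 by omega)
      rwa [hllog] at this
    · have := Nat.lt_pow_succ_log_self (b := 2) one_lt_two l
      rwa [hllog] at this
  · have : pathColors β col l = ancColors col l := by
      rw [pathColors, ancColors, hllog]
    rw [this]
    exact le_trans hzcard (Finset.card_le_card (ancColors_mul_pow col z _ hz1))
end

section
/- There is a constant c > 0 such that the following holds for all integers β ≥ 2 and all integers k ≥ β + 1. Set k' = ⌊k/(β + 1)⌋·(β + 1). Let T be the complete binary tree of height β, and consider any multi-coloring of T such that (i) every non-leaf node is assigned a multiset of exactly k'/(β + 1) colors, (ii) every leaf is assigned a multiset of exactly k'/(β + 1) + (k − k') colors, and (iii) each color class has size at most k (note k ≤ 2k'). Then there exists a root-leaf path of T along which at least c·β/log₂ β distinct colors appear. -/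
open Finset

open Finset

private lemma lt_div_succ_mul (l n : ℕ) (hn : 0 < n) : l < (l / n + 1) * n := by
  have h1 := Nat.div_add_mod l n
  have h2 := Nat.mod_lt l hn
  calc l = n * (l / n) + l % n := h1.symm
    _ < n * (l / n) + n := by omega
    _ = (l / n + 1) * n := by ring

private lemma Ico_mul_pow_biUnion (a b t : ℕ) :
    Finset.Ico (a * 2 ^ t) (b * 2 ^ t) =
      (Finset.Ico a b).biUnion (fun v => Finset.Ico (v * 2 ^ t) ((v + 1) * 2 ^ t)) := by
  have hpos : (0:ℕ) < 2 ^ t := by positivity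
  ext l
  simp only [Finset.mem_biUnion, Finset.mem_Ico]
  constructor
  · rintro ⟨h1, h2⟩
    exact ⟨l / 2 ^ t, ⟨(Nat.le_div_iff_mul_le hpos).2 h1, (Nat.div_lt_iff_lt_mul hpos).2 h2⟩,
      Nat.div_mul_le_self _ _, lt_div_succ_mul l _ hpos⟩
  · rintro ⟨v, ⟨hv1, hv2⟩, h1, h2⟩
    exact ⟨le_trans (Nat.mul_le_mul_right _ hv1) h1,
      lt_of_lt_of_le h2 (Nat.mul_le_mul_right _ hv2)⟩

private lemma pairwise_disj_Ico (a b t : ℕ) :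
    Set.PairwiseDisjoint ↑(Finset.Ico a b)
      (fun v => Finset.Ico (v * 2 ^ t) ((v + 1) * 2 ^ t)) := by
  intro v _ w _ hvw
  apply Finset.disjoint_left.2
  intro l hl hl'
  rw [Finset.mem_Ico] at hl hl'
  exact hvw (by rw [← Nat.div_eq_of_lt_le hl.1 hl.2, Nat.div_eq_of_lt_le hl'.1 hl'.2])

private lemma sum_div_pow (a b t : ℕ) (f : ℕ → ℕ) :
    ∑ l ∈ Finset.Ico (a * 2 ^ t) (b * 2 ^ t), f (l / 2 ^ t)
      = ∑ v ∈ Finset.Ico a b, 2 ^ t * f v := by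
  rw [Ico_mul_pow_biUnion, Finset.sum_biUnion (pairwise_disj_Ico a b t)]
  refine Finset.sum_congr rfl fun v _ => ?_
  have h1 : ∀ l ∈ Finset.Ico (v * 2 ^ t) ((v + 1) * 2 ^ t), f (l / 2 ^ t) = f v := by
    intro l hl
    rw [Finset.mem_Ico] at hl
    rw [Nat.div_eq_of_lt_le hl.1 hl.2]
  rw [Finset.sum_congr rfl h1, Finset.sum_const, Nat.card_Ico, smul_eq_mul]
  congr 1
  rw [add_mul, one_mul, Nat.add_sub_cancel_left]

private lemma Ico_one_pow_biUnion (β : ℕ) :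
    Finset.Ico 1 (2 ^ β) =
      (Finset.Icc 1 β).biUnion (fun t => Finset.Ico (2 ^ (β - t)) (2 ^ (β + 1 - t))) := by
  ext v
  simp only [Finset.mem_biUnion, Finset.mem_Ico, Finset.mem_Icc]
  constructor
  · rintro ⟨h1, h2⟩
    have hv0 : v ≠ 0 := by omega
    have hlog : Nat.log 2 v < β := Nat.log_lt_of_lt_pow hv0 h2
    refine ⟨β - Nat.log 2 v, ⟨by omega, by omega⟩, ?_, ?_⟩
    · have := Nat.pow_log_le_self 2 hv0
      have he : β - (β - Nat.log 2 v) = Nat.log 2 v := by omega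
      rw [he]; exact this
    · have := Nat.lt_pow_succ_log_self (by norm_num : 1 < 2) v
      have he : β + 1 - (β - Nat.log 2 v) = Nat.log 2 v + 1 := by omega
      rw [he]; exact this
  · rintro ⟨t, ⟨ht1, ht2⟩, h1, h2⟩
    constructor
    · exact le_trans (Nat.one_le_two_pow) h1
    · exact lt_of_lt_of_le h2 (Nat.pow_le_pow_right (by norm_num) (by omega))

private lemma log_eq_of_piece {β t v : ℕ} (ht1 : 1 ≤ t) (ht2 : t ≤ β)
    (h1 : 2 ^ (β - t) ≤ v) (h2 : v < 2 ^ (β + 1 - t)) : Nat.log 2 v = β - t := by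
  apply Nat.log_eq_of_pow_le_of_lt_pow h1
  have he : β - t + 1 = β + 1 - t := by omega
  rw [he]; exact h2

private lemma pairwise_disj_pieces (β : ℕ) :
    Set.PairwiseDisjoint ↑(Finset.Icc 1 β)
      (fun t => Finset.Ico (2 ^ (β - t)) (2 ^ (β + 1 - t))) := by
  intro t ht u hu htu
  rw [Finset.mem_coe, Finset.mem_Icc] at ht hu
  apply Finset.disjoint_left.2
  intro v hv hv'
  rw [Finset.mem_Ico] at hv hv'
  have e1 := log_eq_of_piece ht.1 ht.2 hv.1 hv.2
  have e2 := log_eq_of_piece hu.1 hu.2 hv'.1 hv'.2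
  exact htu (by omega)

/-- master reindexing identity: summing a function of the proper ancestors over
all leaves equals a node-sum weighted by subtree leaf counts. -/
private lemma sum_leaves_anc (β : ℕ) (f : ℕ → ℕ) :
    ∑ l ∈ Finset.Ico (2 ^ β) (2 ^ (β + 1)), ∑ t ∈ Finset.Icc 1 β, f (l / 2 ^ t)
      = ∑ v ∈ Finset.Ico 1 (2 ^ β), 2 ^ (β - Nat.log 2 v) * f v := by
  rw [Finset.sum_comm]
  have step1 : ∀ t ∈ Finset.Icc 1 β,
      ∑ l ∈ Finset.Ico (2 ^ β) (2 ^ (β + 1)), f (l / 2 ^ t)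
        = ∑ v ∈ Finset.Ico (2 ^ (β - t)) (2 ^ (β + 1 - t)), 2 ^ t * f v := by
    intro t ht
    rw [Finset.mem_Icc] at ht
    have h1 : (2:ℕ) ^ β = 2 ^ (β - t) * 2 ^ t := by
      rw [← pow_add]; congr 1; omega
    have h2 : (2:ℕ) ^ (β + 1) = 2 ^ (β + 1 - t) * 2 ^ t := by
      rw [← pow_add]; congr 1; omega
    rw [h1, h2, sum_div_pow]
  rw [Finset.sum_congr rfl step1, Ico_one_pow_biUnion β,
    Finset.sum_biUnion (pairwise_disj_pieces β)]
  refine Finset.sum_congr rfl fun t ht => Finset.sum_congr rfl fun v hv => ?_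
  rw [Finset.mem_Icc] at ht
  rw [Finset.mem_Ico] at hv
  have e1 := log_eq_of_piece ht.1 ht.2 hv.1 hv.2
  congr 2
  omega

private lemma per_color (β k m t₀ : ℕ) (col : ℕ → Multiset ℕ)
    (hmid : ∀ v ∈ Finset.Ico 1 (2 ^ β), Multiset.card (col v) = m)
    (hcap : ∀ x : ℕ, (∑ v ∈ Finset.Ico 1 (2 ^ (β + 1)), (col v).count x) ≤ k)
    (hkm : k ≤ m * 2 ^ t₀) (x : ℕ) :
    ∑ v ∈ Finset.Ico 1 (2 ^ β), 2 ^ (β - Nat.log 2 v) * (col v).count x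
      ≤ m * (t₀ + 1) *
        ((Finset.Ico (2 ^ β) (2 ^ (β + 1))).filter
          (fun l => x ∈ pathColors β col l)).card := by
  classical
  set S : Finset ℕ := (Finset.Ico 1 (2 ^ β)).filter (fun v => x ∈ col v) with hS_def
  have hSfact : ∀ v ∈ S, 1 ≤ v ∧ v < 2 ^ β ∧ x ∈ col v := by
    intro v hv
    rw [hS_def, Finset.mem_filter, Finset.mem_Ico] at hv
    exact ⟨hv.1.1, hv.1.2, hv.2⟩
  have hlevlt : ∀ v ∈ S, Nat.log 2 v < β := by
    intro v hv
    obtain ⟨h1, h2, _⟩ := hSfact v hv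
    exact Nat.log_lt_of_lt_pow (by omega) h2
  set sv : ℕ → ℕ :=
    fun v => ((Finset.range (β + 1)).filter (fun s => v / 2 ^ s ∈ S)).sup id with hsv_def
  set μ : ℕ → ℕ := fun v => v / 2 ^ (sv v) with hμ_def
  have hμS : ∀ v ∈ S, μ v ∈ S := by
    intro v hv
    have hne : ((Finset.range (β + 1)).filter (fun s => v / 2 ^ s ∈ S)).Nonempty := by
      refine ⟨0, ?_⟩
      simp only [Finset.mem_filter, Finset.mem_range, pow_zero, Nat.div_one]
      exact ⟨by omega, hv⟩
    obtain ⟨s, hs, hsup⟩ := Finset.exists_mem_eq_sup _ hne id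
    rw [Finset.mem_filter] at hs
    show v / 2 ^ (sv v) ∈ S
    rw [show sv v = s from hsup]
    exact hs.2
  have hmax : ∀ v ∈ S, ∀ s, s < β + 1 → v / 2 ^ s ∈ S → s ≤ sv v := by
    intro v _ s hs hmem
    exact Finset.le_sup (f := id)
      (Finset.mem_filter.2 ⟨Finset.mem_range.2 hs, hmem⟩)
  have hdiv : ∀ v, v / 2 ^ (sv v) = μ v := fun v => rfl
  have hlev : ∀ v ∈ S, Nat.log 2 v = Nat.log 2 (μ v) + sv v := by
    intro v hv
    have hμv := hμS v hv
    obtain ⟨hμ1, _, _⟩ := hSfact _ hμv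
    have hub : v < (μ v + 1) * 2 ^ (sv v) := by
      rw [← hdiv v]; exact lt_div_succ_mul v _ (by positivity)
    have hlb : (μ v) * 2 ^ (sv v) ≤ v := by
      rw [← hdiv v]; exact Nat.div_mul_le_self _ _
    apply Nat.log_eq_of_pow_le_of_lt_pow
    · calc 2 ^ (Nat.log 2 (μ v) + sv v) = 2 ^ (Nat.log 2 (μ v)) * 2 ^ (sv v) := pow_add 2 _ _
        _ ≤ (μ v) * 2 ^ (sv v) :=
            Nat.mul_le_mul_right _ (Nat.pow_log_le_self 2 (by omega))
        _ ≤ v := hlb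
    · calc v < (μ v + 1) * 2 ^ (sv v) := hub
        _ ≤ 2 ^ (Nat.log 2 (μ v) + 1) * 2 ^ (sv v) :=
            Nat.mul_le_mul_right _ (Nat.lt_pow_succ_log_self (by norm_num) _)
        _ = 2 ^ (Nat.log 2 (μ v) + sv v + 1) := by rw [← pow_add]; congr 1; omega
  have hmin : ∀ v ∈ S, ∀ s, 1 ≤ s → (μ v) / 2 ^ s ∉ S := by
    intro v hv s hs1 hmem
    have he : (μ v) / 2 ^ s = v / 2 ^ (sv v + s) := by
      rw [← hdiv v, Nat.div_div_eq_div_mul, ← pow_add]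
    rw [he] at hmem
    obtain ⟨h1, _, _⟩ := hSfact _ hmem
    have h2 : 2 ^ (sv v + s) ≤ v := by
      have := (Nat.le_div_iff_mul_le (show 0 < 2 ^ (sv v + s) by positivity)).1 h1
      omega
    obtain ⟨_, h3, _⟩ := hSfact v hv
    have h4 : sv v + s < β := by
      by_contra hcon
      push_neg at hcon
      have := Nat.pow_le_pow_right (show 1 ≤ 2 by norm_num) hcon
      omega
    have := hmax v hv (sv v + s) (by omega) hmem
    omega
  set A : Finset ℕ := S.filter (fun a => ∀ s ∈ Finset.Icc 1 β, a / 2 ^ s ∉ S) with hA_def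
  have hAS : ∀ a ∈ A, a ∈ S := by
    intro a ha; rw [hA_def, Finset.mem_filter] at ha; exact ha.1
  have hAmin : ∀ a ∈ A, ∀ s, 1 ≤ s → a / 2 ^ s ∉ S := by
    intro a ha s hs1 hmem
    rw [hA_def, Finset.mem_filter] at ha
    by_cases hsβ : s ≤ β
    · exact ha.2 s (Finset.mem_Icc.2 ⟨hs1, hsβ⟩) hmem
    · obtain ⟨_, ha2, _⟩ := hSfact a (ha.1)
      have : a < 2 ^ s :=
        lt_of_lt_of_le ha2 (Nat.pow_le_pow_right (by norm_num) (by omega))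
      rw [Nat.div_eq_of_lt this] at hmem
      obtain ⟨h0, _, _⟩ := hSfact 0 hmem
      omega
  have hμA : ∀ v ∈ S, μ v ∈ A := by
    intro v hv
    rw [hA_def, Finset.mem_filter]
    exact ⟨hμS v hv, fun s hs => hmin v hv s (Finset.mem_Icc.1 hs).1⟩
  -- restrict the sum to the support S
  have restrict : ∑ v ∈ Finset.Ico 1 (2 ^ β), 2 ^ (β - Nat.log 2 v) * (col v).count x
      = ∑ v ∈ S, 2 ^ (β - Nat.log 2 v) * (col v).count x := by
    rw [hS_def]
    refine (Finset.sum_filter_of_ne ?_).symm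
    intro v _ hne
    by_contra hx
    exact hne (by rw [Multiset.count_eq_zero_of_notMem hx, mul_zero])
  rw [restrict,
    ← Finset.sum_fiberwise_of_maps_to hμA (fun v => 2 ^ (β - Nat.log 2 v) * (col v).count x)]
  -- per-fiber bound
  have fib : ∀ a ∈ A, ∑ v ∈ S.filter (fun v => μ v = a),
      2 ^ (β - Nat.log 2 v) * (col v).count x ≤ m * (t₀ + 1) * 2 ^ (β - Nat.log 2 a) := by
    intro a ha
    set F := S.filter (fun v => μ v = a) with hF_def
    have hFfact : ∀ v ∈ F, v ∈ S ∧ Nat.log 2 v = Nat.log 2 a + sv v ∧ v / 2 ^ (sv v) = a := by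
      intro v hv
      rw [hF_def, Finset.mem_filter] at hv
      refine ⟨hv.1, ?_, by rw [hdiv v, hv.2]⟩
      have := hlev v hv.1
      rw [hv.2] at this
      exact this
    rw [← Finset.sum_filter_add_sum_filter_not F (fun v => Nat.log 2 v - Nat.log 2 a < t₀)]
    have hhead : ∑ v ∈ F.filter (fun v => Nat.log 2 v - Nat.log 2 a < t₀),
        2 ^ (β - Nat.log 2 v) * (col v).count x ≤ t₀ * (m * 2 ^ (β - Nat.log 2 a)) := by
      rw [← Finset.sum_fiberwise_of_maps_to
        (g := fun v => Nat.log 2 v - Nat.log 2 a) (t := Finset.range t₀)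
        (fun v hv => Finset.mem_range.2 (Finset.mem_filter.1 hv).2)
        (fun v => 2 ^ (β - Nat.log 2 v) * (col v).count x)]
      have inner : ∀ s ∈ Finset.range t₀,
          ∑ v ∈ (F.filter (fun v => Nat.log 2 v - Nat.log 2 a < t₀)).filter
            (fun v => Nat.log 2 v - Nat.log 2 a = s),
            2 ^ (β - Nat.log 2 v) * (col v).count x ≤ m * 2 ^ (β - Nat.log 2 a) := by
        intro s _
        set G := (F.filter (fun v => Nat.log 2 v - Nat.log 2 a < t₀)).filter
          (fun v => Nat.log 2 v - Nat.log 2 a = s) with hG_def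
        have hGfact : ∀ v ∈ G, v ∈ S ∧ Nat.log 2 v = Nat.log 2 a + s ∧ v / 2 ^ s = a := by
          intro v hv
          rw [hG_def, Finset.mem_filter, Finset.mem_filter] at hv
          obtain ⟨hvS, hvlev, hvdiv⟩ := hFfact v hv.1.1
          have hsv : sv v = s := by omega
          exact ⟨hvS, by omega, by rw [← hsv]; exact hvdiv⟩
        by_cases hne : G.Nonempty
        · obtain ⟨v₀, hv₀⟩ := hne
          obtain ⟨hv₀S, hv₀lev, _⟩ := hGfact v₀ hv₀
          have hsβ : Nat.log 2 a + s < β := by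
            have := hlevlt v₀ hv₀S; omega
          have step : ∑ v ∈ G, 2 ^ (β - Nat.log 2 v) * (col v).count x
              ≤ ∑ v ∈ G, 2 ^ (β - (Nat.log 2 a + s)) * m := by
            refine Finset.sum_le_sum ?_
            intro v hv
            obtain ⟨hvS, hvlev, _⟩ := hGfact v hv
            obtain ⟨h1, h2, _⟩ := hSfact v hvS
            have hcnt : (col v).count x ≤ m := by
              rw [← hmid v (Finset.mem_Ico.2 ⟨h1, h2⟩)]
              exact Multiset.count_le_card x (col v)
            rw [hvlev]
            exact Nat.mul_le_mul_left _ hcnt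
          have hGsub : G ⊆ Finset.Ico (a * 2 ^ s) ((a + 1) * 2 ^ s) := by
            intro v hv
            obtain ⟨_, _, hvdiv⟩ := hGfact v hv
            rw [Finset.mem_Ico]
            constructor
            · calc a * 2 ^ s = (v / 2 ^ s) * 2 ^ s := by rw [hvdiv]
                _ ≤ v := Nat.div_mul_le_self _ _
            · calc v < (v / 2 ^ s + 1) * 2 ^ s := lt_div_succ_mul v _ (by positivity)
                _ = (a + 1) * 2 ^ s := by rw [hvdiv]
          have hGcard : G.card ≤ 2 ^ s := by
            calc G.card ≤ (Finset.Ico (a * 2 ^ s) ((a + 1) * 2 ^ s)).card :=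
                  Finset.card_le_card hGsub
              _ = 2 ^ s := by rw [Nat.card_Ico, add_mul, one_mul, Nat.add_sub_cancel_left]
          calc ∑ v ∈ G, 2 ^ (β - Nat.log 2 v) * (col v).count x
              ≤ ∑ v ∈ G, 2 ^ (β - (Nat.log 2 a + s)) * m := step
            _ = G.card * (2 ^ (β - (Nat.log 2 a + s)) * m) := by
                rw [Finset.sum_const, smul_eq_mul]
            _ ≤ 2 ^ s * (2 ^ (β - (Nat.log 2 a + s)) * m) :=
                Nat.mul_le_mul_right _ hGcard
            _ = 2 ^ (s + (β - (Nat.log 2 a + s))) * m := by rw [pow_add]; ring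
            _ = m * 2 ^ (β - Nat.log 2 a) := by
                rw [show s + (β - (Nat.log 2 a + s)) = β - Nat.log 2 a from by omega]
                ring
        · rw [Finset.not_nonempty_iff_eq_empty] at hne
          rw [hne, Finset.sum_empty]
          exact Nat.zero_le _
      calc ∑ s ∈ Finset.range t₀, ∑ v ∈ _, 2 ^ (β - Nat.log 2 v) * (col v).count x
          ≤ ∑ _s ∈ Finset.range t₀, m * 2 ^ (β - Nat.log 2 a) := Finset.sum_le_sum inner
        _ = t₀ * (m * 2 ^ (β - Nat.log 2 a)) := by
            rw [Finset.sum_const, Finset.card_range, smul_eq_mul]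
    have htail : ∑ v ∈ F.filter (fun v => ¬(Nat.log 2 v - Nat.log 2 a < t₀)),
        2 ^ (β - Nat.log 2 v) * (col v).count x ≤ m * 2 ^ (β - Nat.log 2 a) := by
      set T := F.filter (fun v => ¬(Nat.log 2 v - Nat.log 2 a < t₀)) with hT_def
      have hTfact : ∀ v ∈ T, v ∈ S ∧ Nat.log 2 a + t₀ ≤ Nat.log 2 v := by
        intro v hv
        rw [hT_def, Finset.mem_filter] at hv
        obtain ⟨hvS, hvlev, _⟩ := hFfact v hv.1
        exact ⟨hvS, by omega⟩
      by_cases hne : T.Nonempty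
      · obtain ⟨v₀, hv₀⟩ := hne
        obtain ⟨hv₀S, hv₀lev⟩ := hTfact v₀ hv₀
        have hsβ : Nat.log 2 a + t₀ < β := by
          have := hlevlt v₀ hv₀S; omega
        have hTsub : T ⊆ Finset.Ico 1 (2 ^ (β + 1)) := by
          intro v hv
          obtain ⟨hvS, _⟩ := hTfact v hv
          obtain ⟨h1, h2, _⟩ := hSfact v hvS
          rw [Finset.mem_Ico]
          exact ⟨h1, lt_of_lt_of_le h2 (Nat.pow_le_pow_right (by norm_num) (by omega))⟩
        calc ∑ v ∈ T, 2 ^ (β - Nat.log 2 v) * (col v).count x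
            ≤ ∑ v ∈ T, 2 ^ (β - Nat.log 2 a - t₀) * (col v).count x := by
              refine Finset.sum_le_sum ?_
              intro v hv
              obtain ⟨hvS, hvlev⟩ := hTfact v hv
              exact Nat.mul_le_mul_right _
                (Nat.pow_le_pow_right (by norm_num) (by omega))
          _ = 2 ^ (β - Nat.log 2 a - t₀) * ∑ v ∈ T, (col v).count x := by
              rw [Finset.mul_sum]
          _ ≤ 2 ^ (β - Nat.log 2 a - t₀) * k := by
              refine Nat.mul_le_mul_left _ ?_
              exact le_trans (Finset.sum_le_sum_of_subset hTsub) (hcap x)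
          _ ≤ 2 ^ (β - Nat.log 2 a - t₀) * (m * 2 ^ t₀) := Nat.mul_le_mul_left _ hkm
          _ = m * (2 ^ (β - Nat.log 2 a - t₀) * 2 ^ t₀) := by ring
          _ = m * 2 ^ (β - Nat.log 2 a) := by
              rw [← pow_add,
                show β - Nat.log 2 a - t₀ + t₀ = β - Nat.log 2 a from by omega]
      · rw [Finset.not_nonempty_iff_eq_empty] at hne
        rw [hne, Finset.sum_empty]
        exact Nat.zero_le _
    calc _ ≤ t₀ * (m * 2 ^ (β - Nat.log 2 a)) + m * 2 ^ (β - Nat.log 2 a) :=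
          add_le_add hhead htail
      _ = m * (t₀ + 1) * 2 ^ (β - Nat.log 2 a) := by ring
  -- leaves below the minimal nodes are disjoint and all "hit"
  have hHitsum : ∑ a ∈ A, 2 ^ (β - Nat.log 2 a)
      ≤ ((Finset.Ico (2 ^ β) (2 ^ (β + 1))).filter
          (fun l => x ∈ pathColors β col l)).card := by
    set lu : ℕ → Finset ℕ :=
      fun a => Finset.Ico (a * 2 ^ (β - Nat.log 2 a)) ((a + 1) * 2 ^ (β - Nat.log 2 a))
      with hlu_def
    have hAfact : ∀ a ∈ A, 1 ≤ a ∧ a < 2 ^ β ∧ x ∈ col a ∧ Nat.log 2 a < β := by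
      intro a ha
      obtain ⟨h1, h2, h3⟩ := hSfact a (hAS a ha)
      exact ⟨h1, h2, h3, hlevlt a (hAS a ha)⟩
    have hsubs : ∀ a ∈ A, lu a ⊆ (Finset.Ico (2 ^ β) (2 ^ (β + 1))).filter
        (fun l => x ∈ pathColors β col l) := by
      intro a ha l hl
      obtain ⟨h1, h2, h3, h4⟩ := hAfact a ha
      rw [hlu_def] at hl
      simp only [Finset.mem_Ico] at hl
      have hlge : 2 ^ β ≤ l := by
        calc (2:ℕ) ^ β = 2 ^ (Nat.log 2 a) * 2 ^ (β - Nat.log 2 a) := by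
              rw [← pow_add]; congr 1; omega
          _ ≤ a * 2 ^ (β - Nat.log 2 a) :=
              Nat.mul_le_mul_right _ (Nat.pow_log_le_self 2 (by omega))
          _ ≤ l := hl.1
      have hllt : l < 2 ^ (β + 1) := by
        calc l < (a + 1) * 2 ^ (β - Nat.log 2 a) := hl.2
          _ ≤ 2 ^ (Nat.log 2 a + 1) * 2 ^ (β - Nat.log 2 a) :=
              Nat.mul_le_mul_right _ (Nat.lt_pow_succ_log_self (by norm_num) _)
          _ = 2 ^ (β + 1) := by rw [← pow_add]; congr 1; omega
      have hdivl : l / 2 ^ (β - Nat.log 2 a) = a := Nat.div_eq_of_lt_le hl.1 hl.2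
      rw [Finset.mem_filter, Finset.mem_Ico]
      refine ⟨⟨hlge, hllt⟩, ?_⟩
      rw [pathColors, Finset.mem_biUnion]
      exact ⟨β - Nat.log 2 a, Finset.mem_range.2 (by omega),
        Multiset.mem_toFinset.2 (by rw [hdivl]; exact h3)⟩
    have hdisj : Set.PairwiseDisjoint ↑A lu := by
      intro p hp q hq hpq
      rw [Finset.mem_coe] at hp hq
      apply Finset.disjoint_left.2
      intro l hlp hlq
      rw [hlu_def] at hlp hlq
      simp only [Finset.mem_Ico] at hlp hlq
      have e1 : l / 2 ^ (β - Nat.log 2 p) = p := Nat.div_eq_of_lt_le hlp.1 hlp.2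
      have e2 : l / 2 ^ (β - Nat.log 2 q) = q := Nat.div_eq_of_lt_le hlq.1 hlq.2
      have comp : ∀ p' ∈ A, ∀ q' ∈ A, Nat.log 2 p' ≤ Nat.log 2 q' →
          l / 2 ^ (β - Nat.log 2 p') = p' → l / 2 ^ (β - Nat.log 2 q') = q' → p' = q' := by
        intro p' hp' q' hq' hle he1 he2
        obtain ⟨_, _, _, hplev⟩ := hAfact p' hp'
        obtain ⟨_, _, _, hqlev⟩ := hAfact q' hq'
        have hsplit : β - Nat.log 2 p' = (β - Nat.log 2 q') + (Nat.log 2 q' - Nat.log 2 p') := by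
          omega
        have hpq' : p' = q' / 2 ^ (Nat.log 2 q' - Nat.log 2 p') := by
          have hstep : l / 2 ^ (β - Nat.log 2 p')
              = (l / 2 ^ (β - Nat.log 2 q')) / 2 ^ (Nat.log 2 q' - Nat.log 2 p') := by
            rw [Nat.div_div_eq_div_mul, ← pow_add, ← hsplit]
          rw [he1, he2] at hstep
          exact hstep
        by_cases hδ : Nat.log 2 q' - Nat.log 2 p' = 0
        · rw [hδ, pow_zero, Nat.div_one] at hpq'
          exact hpq'
        · exfalso
          exact hAmin q' hq' (Nat.log 2 q' - Nat.log 2 p') (by omega)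
            (by rw [← hpq']; exact hAS p' hp')
      rcases le_total (Nat.log 2 p) (Nat.log 2 q) with h | h
      · exact hpq (comp p hp q hq h e1 e2)
      · exact hpq (comp q hq p hp h e2 e1).symm
    calc ∑ a ∈ A, 2 ^ (β - Nat.log 2 a) = ∑ a ∈ A, (lu a).card := by
          refine Finset.sum_congr rfl fun a _ => ?_
          rw [hlu_def]
          rw [Nat.card_Ico, add_mul, one_mul, Nat.add_sub_cancel_left]
      _ = (A.biUnion lu).card := (Finset.card_biUnion hdisj).symm
      _ ≤ _ := Finset.card_le_card (Finset.biUnion_subset.2 hsubs)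
  calc ∑ a ∈ A, ∑ v ∈ S.filter (fun v => μ v = a),
        2 ^ (β - Nat.log 2 v) * (col v).count x
      ≤ ∑ a ∈ A, m * (t₀ + 1) * 2 ^ (β - Nat.log 2 a) := Finset.sum_le_sum fib
    _ = m * (t₀ + 1) * ∑ a ∈ A, 2 ^ (β - Nat.log 2 a) := by rw [Finset.mul_sum]
    _ ≤ _ := Nat.mul_le_mul_left _ hHitsum

private lemma main_nat (β k : ℕ) (hβ : 2 ≤ β) (hk : β + 1 ≤ k) (col : ℕ → Multiset ℕ)
    (hmid : ∀ v ∈ Finset.Ico 1 (2 ^ β),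
      Multiset.card (col v) = k / (β + 1) * (β + 1) / (β + 1))
    (hcap : ∀ x : ℕ, (∑ v ∈ treeNodes β, (col v).count x) ≤ k) :
    ∃ l ∈ treeLeaves β, β ≤ (Nat.log 2 β + 4) * (pathColors β col l).card := by
  classical
  set m := k / (β + 1) with hm_def
  have hmm : k / (β + 1) * (β + 1) / (β + 1) = m := Nat.mul_div_cancel _ (by omega)
  rw [hmm] at hmid
  have hm1 : 1 ≤ m := (Nat.one_le_div_iff (by omega)).2 hk
  set t₀ := Nat.log 2 β + 3 with ht₀_def
  have hcap' : ∀ x : ℕ, (∑ v ∈ Finset.Ico 1 (2 ^ (β + 1)), (col v).count x) ≤ k := by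
    intro x; exact hcap x
  -- k ≤ m * 2^t₀
  have hkm : k ≤ m * 2 ^ t₀ := by
    have h1 : k < (m + 1) * (β + 1) := by
      rw [hm_def]; exact lt_div_succ_mul k (β + 1) (by omega)
    have h1' : (m + 1) * (β + 1) = m * (β + 1) + (β + 1) := by ring
    have h2 : β + 1 ≤ m * (β + 1) := le_trans (by omega) (Nat.le_mul_of_pos_left _ (by omega))
    have h3 : k ≤ 2 * (m * (β + 1)) := by omega
    have hlogβ : β < 2 ^ (Nat.log 2 β + 1) := Nat.lt_pow_succ_log_self (by norm_num) β
    have h4 : 2 * (β + 1) ≤ 2 ^ t₀ := by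
      have : (2:ℕ) ^ t₀ = 4 * 2 ^ (Nat.log 2 β + 1) := by
        rw [ht₀_def, show Nat.log 2 β + 3 = 2 + (Nat.log 2 β + 1) from by omega, pow_add]
        norm_num
      omega
    calc k ≤ 2 * (m * (β + 1)) := h3
      _ = m * (2 * (β + 1)) := by ring
      _ ≤ m * 2 ^ t₀ := Nat.mul_le_mul_left _ h4
  set L := Finset.Ico (2 ^ β) (2 ^ (β + 1)) with hL_def
  have hLcard : L.card = 2 ^ β := by
    rw [hL_def, Nat.card_Ico, pow_succ]
    omega
  have hanc : ∀ l ∈ L, ∀ t ∈ Finset.Icc 1 β, l / 2 ^ t ∈ Finset.Ico 1 (2 ^ β) := by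
    intro l hl t ht
    rw [hL_def, Finset.mem_Ico] at hl
    rw [Finset.mem_Icc] at ht
    rw [Finset.mem_Ico]
    have hpos : (0:ℕ) < 2 ^ t := by positivity
    constructor
    · rw [Nat.le_div_iff_mul_le hpos, one_mul]
      calc (2:ℕ) ^ t ≤ 2 ^ β := Nat.pow_le_pow_right (by norm_num) ht.2
        _ ≤ l := hl.1
    · rw [Nat.div_lt_iff_lt_mul hpos]
      calc l < 2 ^ (β + 1) := hl.2
        _ ≤ 2 ^ β * 2 ^ t := by
            rw [← pow_add]
            exact Nat.pow_le_pow_right (by norm_num) (by omega)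
  set X : Finset ℕ := (treeNodes β).biUnion (fun v => (col v).toFinset) with hX_def
  have hXsum : ∀ v ∈ Finset.Ico 1 (2 ^ β),
      ∑ x ∈ X, (col v).count x = Multiset.card (col v) := by
    intro v hv
    rw [Finset.mem_Ico] at hv
    have hsub : (col v).toFinset ⊆ X := by
      intro x hx
      rw [hX_def]
      refine Finset.mem_biUnion.2 ⟨v, ?_, hx⟩
      rw [treeNodes, Finset.mem_Ico]
      exact ⟨hv.1, lt_of_lt_of_le hv.2 (Nat.pow_le_pow_right (by norm_num) (by omega))⟩
    rw [← Multiset.toFinset_sum_count_eq (col v)]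
    exact (Finset.sum_subset hsub (fun x _ hx =>
      Multiset.count_eq_zero_of_notMem (by simpa using hx))).symm
  -- the total budget
  have budget : ∑ x ∈ X, ∑ l ∈ L, ∑ t ∈ Finset.Icc 1 β, (col (l / 2 ^ t)).count x
      = 2 ^ β * (β * m) := by
    rw [Finset.sum_comm]
    have hperleaf : ∀ l ∈ L,
        ∑ x ∈ X, ∑ t ∈ Finset.Icc 1 β, (col (l / 2 ^ t)).count x = β * m := by
      intro l hl
      rw [Finset.sum_comm]
      have : ∀ t ∈ Finset.Icc 1 β, ∑ x ∈ X, (col (l / 2 ^ t)).count x = m := by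
        intro t ht
        rw [hXsum _ (hanc l hl t ht)]
        exact hmid _ (hanc l hl t ht)
      rw [Finset.sum_congr rfl this, Finset.sum_const, Nat.card_Icc, smul_eq_mul]
      norm_num
    rw [Finset.sum_congr rfl hperleaf, Finset.sum_const, hLcard, smul_eq_mul]
  -- per color bound, summed
  have percol : ∀ x ∈ X, ∑ l ∈ L, ∑ t ∈ Finset.Icc 1 β, (col (l / 2 ^ t)).count x
      ≤ m * (t₀ + 1) * (L.filter (fun l => x ∈ pathColors β col l)).card := by
    intro x _
    rw [hL_def, sum_leaves_anc β (fun v => (col v).count x)]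
    exact per_color β k m t₀ col hmid hcap' hkm x
  have swap2 : ∑ x ∈ X, (L.filter (fun l => x ∈ pathColors β col l)).card
      ≤ ∑ l ∈ L, (pathColors β col l).card := by
    calc ∑ x ∈ X, (L.filter (fun l => x ∈ pathColors β col l)).card
        = ∑ x ∈ X, ∑ l ∈ L, (if x ∈ pathColors β col l then 1 else 0) := by
          refine Finset.sum_congr rfl fun x _ => ?_
          rw [Finset.card_filter]
      _ = ∑ l ∈ L, ∑ x ∈ X, (if x ∈ pathColors β col l then 1 else 0) := Finset.sum_comm
      _ = ∑ l ∈ L, (X.filter (fun x => x ∈ pathColors β col l)).card := by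
          refine Finset.sum_congr rfl fun l _ => ?_
          rw [Finset.card_filter]
      _ ≤ ∑ l ∈ L, (pathColors β col l).card := by
          refine Finset.sum_le_sum fun l _ => Finset.card_le_card ?_
          intro x hx
          exact (Finset.mem_filter.1 hx).2
  have main : 2 ^ β * (β * m) ≤ m * (t₀ + 1) * ∑ l ∈ L, (pathColors β col l).card := by
    calc 2 ^ β * (β * m)
        = ∑ x ∈ X, ∑ l ∈ L, ∑ t ∈ Finset.Icc 1 β, (col (l / 2 ^ t)).count x := budget.symm
      _ ≤ ∑ x ∈ X, m * (t₀ + 1) * (L.filter (fun l => x ∈ pathColors β col l)).card :=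
          Finset.sum_le_sum percol
      _ = m * (t₀ + 1) * ∑ x ∈ X, (L.filter (fun l => x ∈ pathColors β col l)).card := by
          rw [Finset.mul_sum]
      _ ≤ m * (t₀ + 1) * ∑ l ∈ L, (pathColors β col l).card :=
          Nat.mul_le_mul_left _ swap2
  have main2 : 2 ^ β * β ≤ (t₀ + 1) * ∑ l ∈ L, (pathColors β col l).card := by
    have e1 : 2 ^ β * (β * m) = m * (2 ^ β * β) := by ring
    have e2 : m * (t₀ + 1) * (∑ l ∈ L, (pathColors β col l).card)
        = m * ((t₀ + 1) * ∑ l ∈ L, (pathColors β col l).card) := by ring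
    rw [e1, e2] at main
    exact Nat.le_of_mul_le_mul_left main (by omega)
  have hB : Nat.log 2 β + 4 = t₀ + 1 := by rw [ht₀_def]
  by_contra hno
  push_neg at hno
  have hbound : ∀ l ∈ L, (t₀ + 1) * (pathColors β col l).card ≤ β - 1 := by
    intro l hl
    have := hno l (by rw [treeLeaves, ← hL_def]; exact hl)
    rw [hB] at this
    omega
  have : (t₀ + 1) * ∑ l ∈ L, (pathColors β col l).card ≤ 2 ^ β * (β - 1) := by
    calc (t₀ + 1) * ∑ l ∈ L, (pathColors β col l).card
        = ∑ l ∈ L, (t₀ + 1) * (pathColors β col l).card := by rw [Finset.mul_sum]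
      _ ≤ ∑ _l ∈ L, (β - 1) := Finset.sum_le_sum hbound
      _ = 2 ^ β * (β - 1) := by rw [Finset.sum_const, hLcard, smul_eq_mul]
  have hfin : 2 ^ β * β ≤ 2 ^ β * (β - 1) := le_trans main2 this
  have := Nat.le_of_mul_le_mul_left hfin (show 0 < 2 ^ β by positivity)
  omega

/-- lower bound for tree multi-colorings, general `k`.
There is a constant `c > 0` such that for every `β ≥ 2` and `k ≥ β + 1`,
setting `k' = ⌊k/(β+1)⌋·(β+1)`, every multi-coloring of the complete binary
tree of height `β` in which every non-leaf node carries exactly `k'/(β+1)`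
colors, every leaf carries exactly `k'/(β+1) + (k - k')` colors, and every
color class has size at most `k`, admits a root-leaf path along which at
least `c · β / log₂ β` distinct colors appear.
(The non-leaf nodes are `1, …, 2^β - 1`; note that `k'/(β+1) = ⌊k/(β+1)⌋`.) -/
theorem statement10 :
    ∃ c : ℝ, 0 < c ∧
      ∀ β k : ℕ, 2 ≤ β → β + 1 ≤ k →
        ∀ col : ℕ → Multiset ℕ,
          (∀ v ∈ Finset.Ico 1 (2 ^ β),
            Multiset.card (col v) = k / (β + 1) * (β + 1) / (β + 1)) →
          (∀ v ∈ treeLeaves β,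
            Multiset.card (col v) =
              k / (β + 1) * (β + 1) / (β + 1) + (k - k / (β + 1) * (β + 1))) →
          (∀ x : ℕ, (∑ v ∈ treeNodes β, (col v).count x) ≤ k) →
          ∃ l ∈ treeLeaves β,
            c * (β : ℝ) / Real.logb 2 (β : ℝ) ≤ ((pathColors β col l).card : ℝ) := by
  refine ⟨1/8, by norm_num, ?_⟩
  intro β k hβ hk col hmid _hleaf hcap
  obtain ⟨l, hl, hcard⟩ := main_nat β k hβ hk col hmid hcap
  refine ⟨l, hl, ?_⟩
  have hβR : (2:ℝ) ≤ (β:ℝ) := by exact_mod_cast hβ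
  have hlog1 : (1:ℝ) ≤ Real.logb 2 (β:ℝ) := by
    rw [show (1:ℝ) = Real.logb 2 2 from (Real.logb_self_eq_one (by norm_num)).symm]
    exact Real.logb_le_logb_of_le (by norm_num) (by norm_num) hβR
  have hlogpos : (0:ℝ) < Real.logb 2 (β:ℝ) := by linarith
  have hnatlog : ((Nat.log 2 β : ℕ) : ℝ) ≤ Real.logb 2 (β:ℝ) := by
    have h1 : ((2:ℝ)) ^ (Nat.log 2 β) ≤ (β:ℝ) := by
      exact_mod_cast Nat.pow_log_le_self 2 (show β ≠ 0 by omega)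
    have h2 : Real.logb 2 ((2:ℝ) ^ (Nat.log 2 β)) = (Nat.log 2 β : ℝ) := by
      simp [Real.logb_pow]
    calc ((Nat.log 2 β : ℕ) : ℝ) = Real.logb 2 ((2:ℝ) ^ (Nat.log 2 β)) := h2.symm
      _ ≤ Real.logb 2 (β:ℝ) :=
          Real.logb_le_logb_of_le (by norm_num) (by positivity) h1
  have hc : (β:ℝ) ≤ ((Nat.log 2 β : ℕ) + 4 : ℝ) * ((pathColors β col l).card : ℝ) := by
    exact_mod_cast hcard
  have hcardnn : (0:ℝ) ≤ ((pathColors β col l).card : ℝ) := by positivity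
  have hBle : ((Nat.log 2 β : ℕ) + 4 : ℝ) ≤ 8 * Real.logb 2 (β:ℝ) := by linarith
  rw [div_le_iff₀ hlogpos]
  nlinarith [mul_le_mul_of_nonneg_right hBle hcardnn]
end
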